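/- arXiv:2509.07232 — 4 statements merged into one kernel-verified Lean document; each statement's English description precedes it below -/
import Mathlib

section
/- A function C : [0,1]² → [0,1] is a bivariate copula if and only if there exists a family (h_v)_{v∈[0,1]} of measurable functions h_v : [0,1] → [0,1] such that (i) C(u,v) = ∫₀ᵘ h_v(t) dt for all (u,v) ∈ [0,1]², (ii) ∫₀¹ h_v(t) dt = v for all v ∈ [0,1], and (iii) for every t ∈ [0,1] the map v ↦ h_v(t) is non-decreasing. -/
open MeasureTheory Set

noncomputable section

def IsCopula (C : ℝ → ℝ → ℝ) : Prop :=
  (∀ u ∈ Icc (0:ℝ) 1, ∀ v ∈ Icc (0:ℝ) 1, C u v ∈ Icc (0:ℝ) 1) ∧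
  (∀ u ∈ Icc (0:ℝ) 1, C u 0 = 0 ∧ C u 1 = u) ∧
  (∀ v ∈ Icc (0:ℝ) 1, C 0 v = 0 ∧ C 1 v = v) ∧
  (∀ u₁ ∈ Icc (0:ℝ) 1, ∀ u₂ ∈ Icc (0:ℝ) 1, ∀ v₁ ∈ Icc (0:ℝ) 1, ∀ v₂ ∈ Icc (0:ℝ) 1,
    u₁ ≤ u₂ → v₁ ≤ v₂ → 0 ≤ C u₂ v₂ - C u₁ v₂ - C u₂ v₁ + C u₁ v₁)

/-- The (a.e. defined) partial derivative of `C` with respect to its first argument. -/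
def d1 (C : ℝ → ℝ → ℝ) (t v : ℝ) : ℝ := deriv (fun s => C s v) t

/-- Chatterjee's rank correlation. -/
def xi (C : ℝ → ℝ → ℝ) : ℝ :=
  6 * (∫ v in (0:ℝ)..1, ∫ t in (0:ℝ)..1, (d1 C t v) ^ 2) - 2

/-- Spearman's footrule. -/
def psi (C : ℝ → ℝ → ℝ) : ℝ :=
  6 * (∫ v in (0:ℝ)..1, C v v) - 2

/-- Stochastically increasing: for each `v`, `t ↦ ∂₁C(t,v)` agrees a.e. on `[0,1]`
with a non-increasing function. -/
def IsSI (C : ℝ → ℝ → ℝ) : Prop :=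
  ∀ v ∈ Icc (0:ℝ) 1, ∃ g : ℝ → ℝ, AntitoneOn g (Icc (0:ℝ) 1) ∧
    (∀ᵐ t ∂(volume.restrict (Icc (0:ℝ) 1)), d1 C t v = g t)

/- ## Auxiliary lemmas -/

section Helpers

open Filter Topology


lemma slope_rewrite' {f : ℝ → ℝ} {s t : ℝ} : (f s - f t) / (s - t) = (f t - f s) / (t - s) := by
  rw [← neg_div_neg_eq]; ring_nf

lemma deriv_nonneg_of_monotone' {f : ℝ → ℝ} (hm : Monotone f) (t : ℝ) : 0 ≤ deriv f t := by
  by_cases hd : DifferentiableAt ℝ f t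
  · have ht := hasDerivAt_iff_tendsto_slope.mp hd.hasDerivAt
    refine ge_of_tendsto ht ?_
    filter_upwards [self_mem_nhdsWithin] with s hs
    rw [slope_def_field]
    rcases lt_or_gt_of_ne (hs : s ≠ t) with h | h
    · rw [slope_rewrite']
      exact div_nonneg (by simpa using hm h.le) (by linarith)
    · exact div_nonneg (by simpa using hm h.le) (by linarith)
  · simp [deriv_zero_of_not_differentiableAt hd]

lemma deriv_le_one_of_lipschitz' {f : ℝ → ℝ} (hl : LipschitzWith 1 f) (t : ℝ) :
    deriv f t ≤ 1 := by
  by_cases hd : DifferentiableAt ℝ f t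
  · have ht := hasDerivAt_iff_tendsto_slope.mp hd.hasDerivAt
    refine le_of_tendsto ht ?_
    filter_upwards [self_mem_nhdsWithin] with s hs
    have hls := hl.dist_le_mul s t
    rw [NNReal.coe_one, one_mul, Real.dist_eq, Real.dist_eq] at hls
    have habs := abs_le.mp hls
    rw [slope_def_field]
    rcases lt_or_gt_of_ne (hs : s ≠ t) with h | h
    · rw [slope_rewrite']
      rw [div_le_one (by linarith : (0:ℝ) < t - s)]
      have : |s - t| = t - s := by rw [abs_of_neg (by linarith)]; ring
      linarith [habs.1, this ▸ habs.1]
    · rw [div_le_one (by linarith : (0:ℝ) < s - t)]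
      have : |s - t| = s - t := abs_of_pos (by linarith)
      linarith [habs.2, this ▸ habs.2]
  · simp [deriv_zero_of_not_differentiableAt hd]

lemma tendsto_slope_seq' {F : ℝ → ℝ} {x d : ℝ} (h : HasDerivAt F d x) :
    Tendsto (fun n : ℕ => (F (x + ((n:ℝ)+1)⁻¹) - F x) * ((n:ℝ)+1)) atTop (𝓝 d) := by
  have hslope := hasDerivAt_iff_tendsto_slope.mp h
  have hseq : Tendsto (fun n : ℕ => x + ((n:ℝ)+1)⁻¹) atTop (𝓝[≠] x) := by
    apply tendsto_nhdsWithin_of_tendsto_nhds_of_eventually_within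
    · have : Tendsto (fun n : ℕ => ((n:ℝ)+1)⁻¹) atTop (𝓝 0) := by
        simpa using tendsto_one_div_add_atTop_nhds_zero_nat (𝕜 := ℝ)
      simpa using tendsto_const_nhds.add this
    · filter_upwards with n
      have : (0:ℝ) < ((n:ℝ)+1)⁻¹ := by positivity
      simp only [mem_compl_iff, mem_singleton_iff]
      intro hc
      nlinarith [hc]
  have := hslope.comp hseq
  refine this.congr fun n => ?_
  have hne : ((n:ℝ)+1) ≠ 0 := by positivity
  simp only [Function.comp, slope_def_field]
  rw [add_sub_cancel_left]
  rw [div_eq_mul_inv, inv_inv, mul_comm]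

lemma integral_deriv_of_lipschitz' {f : ℝ → ℝ} (hl : LipschitzWith 1 f) {u : ℝ} (hu : 0 ≤ u) :
    ∫ t in (0:ℝ)..u, deriv f t = f u - f 0 := by
  have hc : Continuous f := hl.continuous
  set F : ℝ → ℝ := fun x => ∫ t in (0:ℝ)..x, f t with hF
  have hFd : ∀ x : ℝ, HasDerivAt F (f x) x := fun x =>
    intervalIntegral.integral_hasDerivAt_right (hc.intervalIntegrable _ _)
      hc.aestronglyMeasurable.stronglyMeasurableAtFilter hc.continuousAt
  set g : ℕ → ℝ → ℝ := fun n t => (f (t + ((n:ℝ)+1)⁻¹) - f t) * ((n:ℝ)+1) with hg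
  have key : Tendsto (fun n => ∫ t in Ioc (0:ℝ) u, g n t) atTop
      (𝓝 (∫ t in Ioc (0:ℝ) u, deriv f t)) := by
    apply MeasureTheory.tendsto_integral_of_dominated_convergence (fun _ => (1:ℝ))
    · intro n
      exact ((hc.comp (continuous_id.add continuous_const)).sub hc).mul
        continuous_const |>.aestronglyMeasurable
    · exact integrableOn_const measure_Ioc_lt_top.ne
    · intro n
      filter_upwards with t
      have hd := hl.dist_le_mul (t + ((n:ℝ)+1)⁻¹) t
      rw [NNReal.coe_one, one_mul, Real.dist_eq, Real.dist_eq] at hd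
      simp only [add_sub_cancel_left] at hd
      rw [abs_of_pos (by positivity : (0:ℝ) < ((n:ℝ)+1)⁻¹)] at hd
      have h1 : (0:ℝ) < (n:ℝ)+1 := by positivity
      rw [Real.norm_eq_abs, abs_mul, abs_of_pos h1]
      calc |f (t + ((n:ℝ)+1)⁻¹) - f t| * ((n:ℝ)+1) ≤ ((n:ℝ)+1)⁻¹ * ((n:ℝ)+1) := by
            apply mul_le_mul_of_nonneg_right hd h1.le
        _ = 1 := inv_mul_cancel₀ h1.ne'
    · have hae : ∀ᵐ t : ℝ, DifferentiableAt ℝ f t := hl.ae_differentiableAt_of_real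
      refine ae_restrict_of_ae ?_
      filter_upwards [hae] with t ht
      exact tendsto_slope_seq' ht.hasDerivAt
  have compute : ∀ n : ℕ, ∫ t in Ioc (0:ℝ) u, g n t =
      (F (u + ((n:ℝ)+1)⁻¹) - F u) * ((n:ℝ)+1) - (F (0 + ((n:ℝ)+1)⁻¹) - F 0) * ((n:ℝ)+1) := by
    intro n
    set d : ℝ := ((n:ℝ)+1)⁻¹ with hd
    have i1 : IntervalIntegrable (fun t => f (t + d)) volume 0 u :=
      (hc.comp (continuous_id.add continuous_const)).intervalIntegrable _ _
    have i2 : IntervalIntegrable f volume 0 u := hc.intervalIntegrable _ _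
    rw [← intervalIntegral.integral_of_le hu]
    have : ∫ t in (0:ℝ)..u, g n t
        = (∫ t in (0:ℝ)..u, (f (t + d) - f t)) * ((n:ℝ)+1) := by
      rw [← intervalIntegral.integral_mul_const]
    rw [this, intervalIntegral.integral_sub i1 i2,
      intervalIntegral.integral_comp_add_right f d]
    have h1 : (∫ x in (0:ℝ)+d..u+d, f x) = F (u + d) - F d := by
      rw [hF]
      simp only [zero_add]
      rw [← intervalIntegral.integral_interval_sub_left
        (hc.intervalIntegrable _ _) (hc.intervalIntegrable _ _)]
    rw [h1]
    have hF0 : F 0 = 0 := intervalIntegral.integral_same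
    rw [hF0, zero_add]
    ring
  have limr : Tendsto (fun n : ℕ =>
      (F (u + ((n:ℝ)+1)⁻¹) - F u) * ((n:ℝ)+1) - (F (0 + ((n:ℝ)+1)⁻¹) - F 0) * ((n:ℝ)+1))
      atTop (𝓝 (f u - f 0)) :=
    (tendsto_slope_seq' (hFd u)).sub (tendsto_slope_seq' (hFd 0))
  have := tendsto_nhds_unique (key.congr fun n => (compute n).symm ▸ rfl) limr
  rw [intervalIntegral.integral_of_le hu, this]

/-- clamp to `[0,1]` -/
def projI (s : ℝ) : ℝ := max 0 (min 1 s)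

lemma projI_mem (s : ℝ) : projI s ∈ Icc (0:ℝ) 1 :=
  ⟨le_max_left _ _, max_le (by norm_num) (min_le_left _ _)⟩

lemma projI_monotone : Monotone projI := fun a b hab =>
  max_le_max le_rfl (min_le_min le_rfl hab)

lemma projI_lipschitz : LipschitzWith 1 projI := by
  apply LipschitzWith.of_dist_le_mul
  intro a b
  rw [NNReal.coe_one, one_mul, Real.dist_eq, Real.dist_eq]
  unfold projI
  calc |max 0 (min 1 a) - max 0 (min 1 b)| ≤ |min 1 a - min 1 b| := by
        rw [max_comm 0 (min 1 a), max_comm 0 (min 1 b)]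
        exact abs_max_sub_max_le_abs _ _ _
    _ ≤ |a - b| := by
        refine (abs_min_sub_min_le_max 1 a 1 b).trans ?_
        simp

lemma projI_of_mem {s : ℝ} (hs : s ∈ Icc (0:ℝ) 1) : projI s = s := by
  simp only [projI, min_eq_right hs.2, max_eq_right hs.1]

lemma integrableOn_of_bounded01 {φ : ℝ → ℝ} (hm : Measurable φ)
    (hb : ∀ t ∈ Icc (0:ℝ) 1, φ t ∈ Icc (0:ℝ) 1) {a b : ℝ}
    (ha : a ∈ Icc (0:ℝ) 1) (hb' : b ∈ Icc (0:ℝ) 1) :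
    IntervalIntegrable φ volume a b := by
  constructor <;>
  · refine Integrable.mono' (g := fun _ => (1:ℝ))
      (integrableOn_const measure_Ioc_lt_top.ne) hm.aestronglyMeasurable ?_
    rw [ae_restrict_iff' measurableSet_Ioc]
    filter_upwards with t ht
    have ht1 : t ∈ Icc (0:ℝ) 1 := by
      constructor
      · rcases ht with ⟨h1, _⟩; first
        | exact le_trans ha.1 h1.le
        | exact le_trans hb'.1 h1.le
      · rcases ht with ⟨_, h2⟩; first
        | exact le_trans h2 hb'.2
        | exact le_trans h2 ha.2
    have := hb t ht1
    rw [Real.norm_eq_abs, abs_le]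
    exact ⟨by linarith [this.1], this.2⟩


end Helpers

/-- A function `C` is a bivariate copula if and only if there is a family
`h v` of measurable functions `[0,1] → [0,1]` with `C u v = ∫ t in 0..u, h v t`,
`∫ t in 0..1, h v t = v`, and `v ↦ h v t` non-decreasing. -/
theorem copula_characterization (C : ℝ → ℝ → ℝ) :
    IsCopula C ↔
      ∃ h : ℝ → ℝ → ℝ,
        (∀ v ∈ Icc (0:ℝ) 1, Measurable (h v)) ∧
        (∀ v ∈ Icc (0:ℝ) 1, ∀ t ∈ Icc (0:ℝ) 1, h v t ∈ Icc (0:ℝ) 1) ∧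
        (∀ u ∈ Icc (0:ℝ) 1, ∀ v ∈ Icc (0:ℝ) 1, C u v = ∫ t in (0:ℝ)..u, h v t) ∧
        (∀ v ∈ Icc (0:ℝ) 1, (∫ t in (0:ℝ)..1, h v t) = v) ∧
        (∀ t ∈ Icc (0:ℝ) 1, MonotoneOn (fun v => h v t) (Icc (0:ℝ) 1)) := by

  constructor
  · intro hC
    obtain ⟨hrange, hu01, hv01, hrect⟩ := hC
    have h0I : (0:ℝ) ∈ Icc (0:ℝ) 1 := ⟨le_rfl, zero_le_one⟩
    have h1I : (1:ℝ) ∈ Icc (0:ℝ) 1 := ⟨zero_le_one, le_rfl⟩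
    -- basic monotonicity / Lipschitz estimates
    have hm1 : ∀ v ∈ Icc (0:ℝ) 1, ∀ a ∈ Icc (0:ℝ) 1, ∀ b ∈ Icc (0:ℝ) 1, a ≤ b →
        C a v ≤ C b v := by
      intro v hv a ha b hb hab
      have := hrect a ha b hb 0 h0I v hv hab hv.1
      have ha0 := (hu01 a ha).1
      have hb0 := (hu01 b hb).1
      linarith
    have hl1 : ∀ v ∈ Icc (0:ℝ) 1, ∀ a ∈ Icc (0:ℝ) 1, ∀ b ∈ Icc (0:ℝ) 1, a ≤ b →
        C b v - C a v ≤ b - a := by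
      intro v hv a ha b hb hab
      have := hrect a ha b hb v hv 1 h1I hab hv.2
      have ha1 := (hu01 a ha).2
      have hb1 := (hu01 b hb).2
      linarith
    have hl2 : ∀ u ∈ Icc (0:ℝ) 1, ∀ v ∈ Icc (0:ℝ) 1, ∀ w ∈ Icc (0:ℝ) 1, v ≤ w →
        C u w - C u v ≤ w - v := by
      intro u hu v hv w hw hvw
      have := hrect u hu 1 h1I v hv w hw hu.2 hvw
      have h1v := (hv01 v hv).2
      have h1w := (hv01 w hw).2
      linarith
    -- the clamped sections
    set fC : ℝ → ℝ → ℝ := fun v s => C (projI s) v with hfC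
    have hfm : ∀ v ∈ Icc (0:ℝ) 1, Monotone (fC v) := by
      intro v hv a b hab
      exact hm1 v hv _ (projI_mem a) _ (projI_mem b) (projI_monotone hab)
    have hfl : ∀ v ∈ Icc (0:ℝ) 1, LipschitzWith 1 (fC v) := by
      intro v hv
      apply LipschitzWith.of_dist_le_mul
      intro a b
      rw [NNReal.coe_one, one_mul, Real.dist_eq, Real.dist_eq]
      have hpl := projI_lipschitz.dist_le_mul a b
      rw [NNReal.coe_one, one_mul, Real.dist_eq, Real.dist_eq] at hpl
      rcases le_total (projI a) (projI b) with hab | hab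
      · have h1 := hm1 v hv _ (projI_mem a) _ (projI_mem b) hab
        have h2 := hl1 v hv _ (projI_mem a) _ (projI_mem b) hab
        have h3 : projI b - projI a ≤ |a - b| := by
          have h4 := abs_sub_comm (projI a) (projI b)
          rw [abs_of_nonneg (sub_nonneg.mpr hab)] at h4
          linarith
        rw [abs_le]
        exact ⟨by linarith, by linarith [abs_nonneg (a - b)]⟩
      · have h1 := hm1 v hv _ (projI_mem b) _ (projI_mem a) hab
        have h2 := hl1 v hv _ (projI_mem b) _ (projI_mem a) hab
        have h3 : projI a - projI b ≤ |a - b| := by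
          rw [abs_of_nonneg (sub_nonneg.mpr hab)] at hpl
          linarith
        rw [abs_le]
        exact ⟨by linarith [abs_nonneg (a - b)], by linarith⟩
    set D : ℝ → ℝ → ℝ := fun v t => deriv (fC v) t with hD
    have hder : ∀ v ∈ Icc (0:ℝ) 1, ∀ t : ℝ, D v t ∈ Icc (0:ℝ) 1 := fun v hv t =>
      ⟨deriv_nonneg_of_monotone' (hfm v hv) t, deriv_le_one_of_lipschitz' (hfl v hv) t⟩
    have hdmeas : ∀ v : ℝ, Measurable (D v) := fun v => measurable_deriv _
    have hftc : ∀ v ∈ Icc (0:ℝ) 1, ∀ u ∈ Icc (0:ℝ) 1,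
        (∫ t in (0:ℝ)..u, D v t) = C u v := by
      intro v hv u hu
      have := integral_deriv_of_lipschitz' (hfl v hv) hu.1
      rw [hD]
      rw [this, hfC]
      simp only [projI_of_mem hu, projI_of_mem h0I, (hv01 v hv).1, sub_zero]
    have haemono : ∀ v ∈ Icc (0:ℝ) 1, ∀ w ∈ Icc (0:ℝ) 1, v ≤ w →
        ∀ᵐ t : ℝ, D v t ≤ D w t := by
      intro v hv w hw hvw
      have difm : Monotone (fun s => fC w s - fC v s) := by
        intro a b hab
        have := hrect _ (projI_mem a) _ (projI_mem b) v hv w hw (projI_monotone hab) hvw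
        simp only [hfC]
        linarith
      filter_upwards [(hfl v hv).ae_differentiableAt_of_real,
        (hfl w hw).ae_differentiableAt_of_real] with t h1 h2
      have h3 := deriv_nonneg_of_monotone' difm t
      rw [deriv_fun_sub h2 h1] at h3
      simp only [hD]
      linarith
    -- the candidate density
    set H : ℝ → ℝ → ENNReal := fun v t =>
      ⨆ (q : ℚ), ⨆ (_ : 0 ≤ (q:ℝ) ∧ (q:ℝ) ≤ v), ENNReal.ofReal (D (q:ℝ) t) with hH
    have hHle : ∀ v ∈ Icc (0:ℝ) 1, ∀ t : ℝ, H v t ≤ 1 := by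
      intro v hv t
      refine iSup_le fun q => iSup_le fun hq => ?_
      exact ENNReal.ofReal_le_one.mpr (hder (q:ℝ) ⟨hq.1, hq.2.trans hv.2⟩ t).2
    have hHne : ∀ v ∈ Icc (0:ℝ) 1, ∀ t : ℝ, H v t ≠ ⊤ := fun v hv t =>
      (lt_of_le_of_lt (hHle v hv t) ENNReal.one_lt_top).ne
    have hhm : ∀ v ∈ Icc (0:ℝ) 1, Measurable (fun t => (H v t).toReal) := by
      intro v _
      apply Measurable.ennreal_toReal
      exact Measurable.iSup fun q => Measurable.iSup fun _ =>
        ENNReal.measurable_ofReal.comp (hdmeas (q:ℝ))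
    have hhr : ∀ v ∈ Icc (0:ℝ) 1, ∀ t : ℝ, (H v t).toReal ∈ Icc (0:ℝ) 1 := by
      intro v hv t
      refine ⟨ENNReal.toReal_nonneg, ?_⟩
      have := ENNReal.toReal_mono ENNReal.one_ne_top (hHle v hv t)
      simpa using this
    -- the integral representation
    have hint : ∀ u ∈ Icc (0:ℝ) 1, ∀ v ∈ Icc (0:ℝ) 1,
        C u v = ∫ t in (0:ℝ)..u, (H v t).toReal := by
      intro u hu v hv
      have hIint : IntervalIntegrable (fun t => (H v t).toReal) volume 0 u :=
        integrableOn_of_bounded01 (hhm v hv) (fun t _ => hhr v hv t) h0I hu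
      have hDint : ∀ w ∈ Icc (0:ℝ) 1, IntervalIntegrable (D w) volume 0 u := fun w hw =>
        integrableOn_of_bounded01 (hdmeas w) (fun t _ => hder w hw t) h0I hu
      -- upper bound
      have hae : ∀ᵐ t : ℝ, ∀ q : ℚ, (0 ≤ (q:ℝ) ∧ (q:ℝ) ≤ v) → D (q:ℝ) t ≤ D v t := by
        rw [ae_all_iff]
        intro q
        by_cases hq : (0 ≤ (q:ℝ) ∧ (q:ℝ) ≤ v)
        · filter_upwards [haemono (q:ℝ) ⟨hq.1, hq.2.trans hv.2⟩ v hv hq.2] with t ht _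
          exact ht
        · filter_upwards with t hq'
          exact absurd hq' hq
      have hle : ∀ᵐ t : ℝ, (H v t).toReal ≤ D v t := by
        filter_upwards [hae] with t ht
        have h1 : H v t ≤ ENNReal.ofReal (D v t) :=
          iSup_le fun q => iSup_le fun hq => ENNReal.ofReal_le_ofReal (ht q hq)
        calc (H v t).toReal ≤ (ENNReal.ofReal (D v t)).toReal :=
              ENNReal.toReal_mono ENNReal.ofReal_ne_top h1
          _ = D v t := ENNReal.toReal_ofReal (hder v hv t).1
      have hupper : (∫ t in (0:ℝ)..u, (H v t).toReal) ≤ C u v := by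
        calc (∫ t in (0:ℝ)..u, (H v t).toReal) ≤ ∫ t in (0:ℝ)..u, D v t :=
              intervalIntegral.integral_mono_ae hu.1 hIint (hDint v hv) hle
          _ = C u v := hftc v hv u hu
      -- lower bound
      have hq_le : ∀ q : ℚ, (0 ≤ (q:ℝ) ∧ (q:ℝ) ≤ v) →
          C u (q:ℝ) ≤ ∫ t in (0:ℝ)..u, (H v t).toReal := by
        intro q hq
        have hqI : (q:ℝ) ∈ Icc (0:ℝ) 1 := ⟨hq.1, hq.2.trans hv.2⟩
        have hpt : ∀ t : ℝ, D (q:ℝ) t ≤ (H v t).toReal := by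
          intro t
          have h1 : ENNReal.ofReal (D (q:ℝ) t) ≤ H v t :=
            le_iSup_of_le q (le_iSup (fun _ => ENNReal.ofReal (D (q:ℝ) t)) hq)
          have h2 := ENNReal.toReal_mono (hHne v hv t) h1
          rwa [ENNReal.toReal_ofReal (hder (q:ℝ) hqI t).1] at h2
        calc C u (q:ℝ) = ∫ t in (0:ℝ)..u, D (q:ℝ) t := (hftc (q:ℝ) hqI u hu).symm
          _ ≤ ∫ t in (0:ℝ)..u, (H v t).toReal :=
              intervalIntegral.integral_mono hu.1 (hDint (q:ℝ) hqI) hIint hpt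
      have hlower : C u v ≤ ∫ t in (0:ℝ)..u, (H v t).toReal := by
        apply le_of_forall_pos_le_add
        intro ε hε
        rcases le_or_gt v ε with hve | hve
        · have h1 : C u v ≤ v := by
            have := hl2 u hu 0 h0I v hv hv.1
            have h0 : C u 0 = 0 := (hu01 u hu).1
            linarith
          have hnn : 0 ≤ ∫ t in (0:ℝ)..u, (H v t).toReal :=
            intervalIntegral.integral_nonneg hu.1 (fun t _ => ENNReal.toReal_nonneg)
          linarith
        · obtain ⟨q, hq1, hq2⟩ := exists_rat_btwn (show v - ε < v by linarith)
          have hq0 : 0 ≤ (q:ℝ) := by linarith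
          have hlow := hq_le q ⟨hq0, hq2.le⟩
          have hqI : (q:ℝ) ∈ Icc (0:ℝ) 1 := ⟨hq0, hq2.le.trans hv.2⟩
          have := hl2 u hu (q:ℝ) hqI v hv hq2.le
          linarith
      linarith
    refine ⟨fun v t => (H v t).toReal, hhm, fun v hv t _ => hhr v hv t, hint, ?_, ?_⟩
    · intro v hv
      rw [← hint 1 h1I v hv]
      exact (hv01 v hv).2
    · intro t _ v₁ hv₁ v₂ hv₂ hv
      apply ENNReal.toReal_mono (hHne v₂ hv₂ t)
      refine iSup_le fun q => iSup_le fun hq => ?_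
      exact le_iSup_of_le q (le_iSup (fun _ => ENNReal.ofReal (D (q:ℝ) t)) ⟨hq.1, hq.2.trans hv⟩)
  · rintro ⟨h, hmeas, hrange, hrepr, htot, hmono⟩
    have h0I : (0:ℝ) ∈ Icc (0:ℝ) 1 := ⟨le_rfl, zero_le_one⟩
    have h1I : (1:ℝ) ∈ Icc (0:ℝ) 1 := ⟨zero_le_one, le_rfl⟩
    have hint : ∀ v ∈ Icc (0:ℝ) 1, ∀ a ∈ Icc (0:ℝ) 1, ∀ b ∈ Icc (0:ℝ) 1,
        IntervalIntegrable (h v) volume a b := fun v hv a ha b hb =>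
      integrableOn_of_bounded01 (hmeas v hv) (hrange v hv) ha hb
    have subIcc : ∀ a ∈ Icc (0:ℝ) 1, ∀ b ∈ Icc (0:ℝ) 1, ∀ t ∈ Icc a b, t ∈ Icc (0:ℝ) 1 :=
      fun a ha b hb t ht => ⟨le_trans ha.1 ht.1, le_trans ht.2 hb.2⟩
    have hnn : ∀ v ∈ Icc (0:ℝ) 1, ∀ a ∈ Icc (0:ℝ) 1, ∀ b ∈ Icc (0:ℝ) 1, a ≤ b →
        0 ≤ ∫ t in a..b, h v t := by
      intro v hv a ha b hb hab
      exact intervalIntegral.integral_nonneg hab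
        (fun t ht => (hrange v hv t (subIcc a ha b hb t ht)).1)
    have hle : ∀ v ∈ Icc (0:ℝ) 1, ∀ a ∈ Icc (0:ℝ) 1, ∀ b ∈ Icc (0:ℝ) 1, a ≤ b →
        (∫ t in a..b, h v t) ≤ b - a := by
      intro v hv a ha b hb hab
      calc (∫ t in a..b, h v t) ≤ ∫ t in a..b, (1:ℝ) :=
            intervalIntegral.integral_mono_on hab (hint v hv a ha b hb)
              intervalIntegrable_const
              (fun t ht => (hrange v hv t (subIcc a ha b hb t ht)).2)
        _ = b - a := by simp
    have hadd : ∀ v ∈ Icc (0:ℝ) 1, ∀ u ∈ Icc (0:ℝ) 1,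
        (∫ t in (0:ℝ)..u, h v t) + (∫ t in u..(1:ℝ), h v t) = ∫ t in (0:ℝ)..(1:ℝ), h v t :=
      fun v hv u hu => intervalIntegral.integral_add_adjacent_intervals
        (hint v hv 0 h0I u hu) (hint v hv u hu 1 h1I)
    refine ⟨?_, ?_, ?_, ?_⟩
    · intro u hu v hv
      rw [hrepr u hu v hv]
      constructor
      · exact hnn v hv 0 h0I u hu hu.1
      · have := hle v hv 0 h0I u hu hu.1
        linarith [hu.2]
    · intro u hu
      constructor
      · rw [hrepr u hu 0 h0I]
        have h1 := hnn 0 h0I 0 h0I u hu hu.1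
        have h2 := hnn 0 h0I u hu 1 h1I hu.2
        have h3 := hadd 0 h0I u hu
        rw [htot 0 h0I] at h3
        linarith
      · rw [hrepr u hu 1 h1I]
        have h1 := hle 1 h1I u hu 1 h1I hu.2
        have h2 := hle 1 h1I 0 h0I u hu hu.1
        have h3 := hadd 1 h1I u hu
        rw [htot 1 h1I] at h3
        linarith
    · intro v hv
      constructor
      · rw [hrepr 0 h0I v hv, intervalIntegral.integral_same]
      · rw [hrepr 1 h1I v hv]
        exact htot v hv
    · intro u₁ hu₁ u₂ hu₂ v₁ hv₁ v₂ hv₂ hu hv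
      rw [hrepr u₁ hu₁ v₁ hv₁, hrepr u₂ hu₂ v₁ hv₁, hrepr u₁ hu₁ v₂ hv₂,
        hrepr u₂ hu₂ v₂ hv₂]
      have e1 : (∫ t in (0:ℝ)..u₂, h v₂ t) - (∫ t in (0:ℝ)..u₁, h v₂ t)
          = ∫ t in u₁..u₂, h v₂ t :=
        intervalIntegral.integral_interval_sub_left (hint v₂ hv₂ 0 h0I u₂ hu₂)
          (hint v₂ hv₂ 0 h0I u₁ hu₁)
      have e2 : (∫ t in (0:ℝ)..u₂, h v₁ t) - (∫ t in (0:ℝ)..u₁, h v₁ t)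
          = ∫ t in u₁..u₂, h v₁ t :=
        intervalIntegral.integral_interval_sub_left (hint v₁ hv₁ 0 h0I u₂ hu₂)
          (hint v₁ hv₁ 0 h0I u₁ hu₁)
      have e3 : (∫ t in u₁..u₂, h v₂ t) - (∫ t in u₁..u₂, h v₁ t)
          = ∫ t in u₁..u₂, (h v₂ t - h v₁ t) :=
        (intervalIntegral.integral_sub (hint v₂ hv₂ u₁ hu₁ u₂ hu₂)
          (hint v₁ hv₁ u₁ hu₁ u₂ hu₂)).symm
      have e4 : 0 ≤ ∫ t in u₁..u₂, (h v₂ t - h v₁ t) := by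
        apply intervalIntegral.integral_nonneg hu
        intro t ht
        have htI : t ∈ Icc (0:ℝ) 1 := subIcc u₁ hu₁ u₂ hu₂ t ht
        have := hmono t htI hv₁ hv₂ hv
        simpa using this
      linarith
end
end

section
/- For every bivariate copula C it holds that 0 ≤ ξ(C) and ψ(C) ≤ √(ξ(C)). -/
open MeasureTheory Set

noncomputable section

open Filter

/-! ### Auxiliary lemmas -/

lemma mono_deriv_nonneg {f : ℝ → ℝ} (hf : Monotone f) (x : ℝ) : 0 ≤ deriv f x := by
  by_cases h : DifferentiableAt ℝ f x
  · have hd := h.hasDerivAt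
    rw [hasDerivAt_iff_tendsto_slope] at hd
    have h2 : Tendsto (slope f x) (nhdsWithin x (Ioi x)) (nhds (deriv f x)) :=
      hd.mono_left (nhdsWithin_mono _ (fun y hy => ne_of_gt hy))
    refine ge_of_tendsto h2 ?_
    filter_upwards [self_mem_nhdsWithin] with y hy
    have : x < y := hy
    rw [slope_def_field]
    exact div_nonneg (by simpa [sub_nonneg] using hf this.le) (by linarith)
  · simp [deriv_zero_of_not_differentiableAt h]

lemma lip_deriv_mem {f : ℝ → ℝ} (hf : Monotone f) (hl : LipschitzWith 1 f) (x : ℝ) :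
    deriv f x ∈ Icc (0:ℝ) 1 := by
  refine ⟨mono_deriv_nonneg hf x, ?_⟩
  have := norm_deriv_le_of_lipschitz (𝕜 := ℝ) (x₀ := x) hl
  rw [Real.norm_eq_abs, abs_le] at this
  simpa using this.2

lemma mono_integral_deriv_le {f : ℝ → ℝ} (hf : Monotone f) (hc : Continuous f)
    {a b : ℝ} (hab : a ≤ b) : ∫ t in a..b, deriv f t ≤ f b - f a := by
  have hst : ∀ x, hf.stieltjesFunction x = f x := by
    intro x
    rw [hf.stieltjesFunction_eq]
    exact rightLim_eq_of_tendsto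
      (hc.continuousAt.tendsto.mono_left nhdsWithin_le_nhds)
  have hd := hf.ae_hasDerivAt
  rw [intervalIntegral.integral_of_le hab]
  have hcongr : ∀ᵐ t ∂(volume.restrict (Ioc a b)),
      deriv f t = (Measure.rnDeriv hf.stieltjesFunction.measure volume t).toReal :=
    ae_restrict_of_ae (hd.mono fun x hx => hx.deriv)
  rw [integral_congr_ae hcongr]
  have hle := Measure.setIntegral_toReal_rnDeriv_le
    (μ := hf.stieltjesFunction.measure) (ν := volume) (s := Ioc a b)
    (by rw [StieltjesFunction.measure_Ioc]; exact ENNReal.ofReal_ne_top)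
  refine hle.trans_eq ?_
  rw [measureReal_def, StieltjesFunction.measure_Ioc, hst, hst,
    ENNReal.toReal_ofReal (by simp [sub_nonneg, hf hab])]

lemma deriv_intervalIntegrable {f : ℝ → ℝ} (hf : Monotone f) (hl : LipschitzWith 1 f)
    {a b : ℝ} : IntervalIntegrable (deriv f) volume a b := by
  refine ⟨?_, ?_⟩ <;>
  · refine Integrable.mono' (integrable_const (1:ℝ)) ((measurable_deriv f).aestronglyMeasurable) ?_
    refine ae_of_all _ fun t => ?_
    have h := lip_deriv_mem hf hl t
    rw [Real.norm_eq_abs, abs_le]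
    exact ⟨by linarith [h.1], h.2⟩

lemma mono_lip_integral_deriv_eq {f : ℝ → ℝ} (hf : Monotone f) (hl : LipschitzWith 1 f)
    {a b : ℝ} (hab : a ≤ b) : ∫ t in a..b, deriv f t = f b - f a := by
  have hc : Continuous f := hl.continuous
  refine le_antisymm (mono_integral_deriv_le hf hc hab) ?_
  set g : ℝ → ℝ := fun x => x - f x with hg
  have hgm : Monotone g := by
    intro x y hxy
    have := hl.dist_le_mul x y
    rw [Real.dist_eq, Real.dist_eq] at this
    have h2 : f y - f x ≤ |x - y| := by
      rw [abs_sub_comm]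
      calc f y - f x ≤ |f y - f x| := le_abs_self _
        _ ≤ 1 * |y - x| := by simpa [abs_sub_comm] using this
        _ = |y - x| := one_mul _
    simp only [hg]
    have : |x - y| = y - x := by rw [abs_sub_comm]; exact abs_of_nonneg (by linarith)
    rw [this] at h2
    linarith
  have hgc : Continuous g := continuous_id.sub hc
  have hgle := mono_integral_deriv_le hgm hgc hab
  have hae : ∀ᵐ t, deriv g t = 1 - deriv f t := by
    filter_upwards [hf.ae_differentiableAt] with t ht
    rw [hg]
    have : deriv (fun x => x - f x) t = deriv (fun x => x) t - deriv f t :=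
      deriv_sub differentiableAt_fun_id ht
    simpa using this
  have hcongr : ∫ t in a..b, deriv g t = ∫ t in a..b, (1 - deriv f t) := by
    refine intervalIntegral.integral_congr_ae ?_
    filter_upwards [hae] with t ht _
    exact ht
  rw [hcongr] at hgle
  rw [intervalIntegral.integral_sub intervalIntegrable_const
    (deriv_intervalIntegrable hf hl)] at hgle
  simp only [intervalIntegral.integral_const, smul_eq_mul, mul_one, hg] at hgle
  linarith

lemma int_bdd {μ : Measure ℝ} [IsFiniteMeasure μ] {f : ℝ → ℝ}
    (hm : AEStronglyMeasurable f μ) {M : ℝ} (h : ∀ x, |f x| ≤ M) : Integrable f μ :=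
  (integrable_const M).mono' hm (ae_of_all _ fun x => by
    simpa [Real.norm_eq_abs] using h x)

lemma cs_bdd {μ : Measure ℝ} [IsFiniteMeasure μ] {f g : ℝ → ℝ}
    (hfm : AEStronglyMeasurable f μ) (hgm : AEStronglyMeasurable g μ)
    (hfb : ∀ x, |f x| ≤ 1) (hgb : ∀ x, |g x| ≤ 1) :
    ∫ x, f x * g x ∂μ ≤ Real.sqrt (∫ x, f x ^ 2 ∂μ) * Real.sqrt (∫ x, g x ^ 2 ∂μ) := by
  have hpq : Real.HolderConjugate 2 2 := Real.holderConjugate_iff.mpr ⟨by norm_num, by norm_num⟩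
  have h2 : (ENNReal.ofReal (2:ℝ)) = 2 := by norm_num [ENNReal.ofReal_ofNat]
  have hfL : MemLp f (ENNReal.ofReal (2:ℝ)) μ := by
    rw [h2]
    exact MemLp.of_bound hfm 1 (ae_of_all _ fun x => by simpa [Real.norm_eq_abs] using hfb x)
  have hgL : MemLp g (ENNReal.ofReal (2:ℝ)) μ := by
    rw [h2]
    exact MemLp.of_bound hgm 1 (ae_of_all _ fun x => by simpa [Real.norm_eq_abs] using hgb x)
  have hnorm2 : ∀ y : ℝ, ‖y‖ ^ (2:ℝ) = y ^ 2 := fun y => by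
    rw [show (2:ℝ) = ((2:ℕ):ℝ) by norm_num, Real.rpow_natCast, Real.norm_eq_abs, sq_abs]
  have key := MeasureTheory.integral_mul_norm_le_Lp_mul_Lq hpq hfL hgL
  have hint : Integrable (fun x => f x * g x) μ := by
    refine Integrable.mono' (integrable_const (1:ℝ)) (hfm.mul hgm) (ae_of_all _ fun x => ?_)
    rw [Real.norm_eq_abs, abs_mul]
    calc |f x| * |g x| ≤ 1 * 1 := mul_le_mul (hfb x) (hgb x) (abs_nonneg _) zero_le_one
      _ = 1 := one_mul _
  have hintn : Integrable (fun x => ‖f x‖ * ‖g x‖) μ := by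
    simpa [Real.norm_eq_abs, abs_mul] using hint.abs
  calc ∫ x, f x * g x ∂μ ≤ ∫ x, ‖f x‖ * ‖g x‖ ∂μ := by
        refine integral_mono hint hintn fun x => ?_
        rw [Real.norm_eq_abs, Real.norm_eq_abs, ← abs_mul]
        exact le_abs_self _
    _ ≤ (∫ x, ‖f x‖ ^ (2:ℝ) ∂μ) ^ ((1:ℝ)/2) * (∫ x, ‖g x‖ ^ (2:ℝ) ∂μ) ^ ((1:ℝ)/2) := key
    _ = Real.sqrt (∫ x, f x ^ 2 ∂μ) * Real.sqrt (∫ x, g x ^ 2 ∂μ) := by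
        rw [Real.sqrt_eq_rpow, Real.sqrt_eq_rpow]
        congr 2
        · exact integral_congr_ae (ae_of_all _ fun x => hnorm2 (f x))
        · exact integral_congr_ae (ae_of_all _ fun x => hnorm2 (g x))

/-! ### The clamped copula -/

/-- clamp to [0,1] -/
def cl (x : ℝ) : ℝ := max 0 (min 1 x)

lemma cl_mem (x : ℝ) : cl x ∈ Icc (0:ℝ) 1 :=
  ⟨le_max_left _ _, max_le (by norm_num) (min_le_left _ _)⟩

lemma cl_eq {x : ℝ} (hx : x ∈ Icc (0:ℝ) 1) : cl x = x := by
  rw [cl, min_eq_right hx.2, max_eq_right hx.1]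

lemma cl_mono : Monotone cl := fun x y hxy =>
  max_le_max le_rfl (min_le_min le_rfl hxy)

lemma cl_abs (x y : ℝ) : |cl x - cl y| ≤ |x - y| := by
  rw [cl, cl]
  calc |max 0 (min 1 x) - max 0 (min 1 y)| ≤ |min 1 x - min 1 y| := by
        rw [max_comm 0 (min 1 x), max_comm 0 (min 1 y)]
        exact abs_max_sub_max_le_abs _ _ _
    _ ≤ max |1 - 1| |x - y| := abs_min_sub_min_le_max _ _ _ _
    _ = |x - y| := by simp

section Main

variable {C : ℝ → ℝ → ℝ} (hC : IsCopula C)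

/-- horizontal increments -/
lemma cop_horiz (hC : IsCopula C) {u₁ u₂ v : ℝ} (h1 : u₁ ∈ Icc (0:ℝ) 1)
    (h2 : u₂ ∈ Icc (0:ℝ) 1) (hv : v ∈ Icc (0:ℝ) 1) (h : u₁ ≤ u₂) :
    C u₁ v ≤ C u₂ v ∧ C u₂ v - C u₁ v ≤ u₂ - u₁ := by
  obtain ⟨hb, hu, hv', hrect⟩ := hC
  have h0 : (0:ℝ) ∈ Icc (0:ℝ) 1 := by norm_num
  have h1' : (1:ℝ) ∈ Icc (0:ℝ) 1 := by norm_num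
  constructor
  · have := hrect u₁ h1 u₂ h2 0 h0 v hv h hv.1
    have e1 := (hu u₁ h1).1
    have e2 := (hu u₂ h2).1
    linarith
  · have := hrect u₁ h1 u₂ h2 v hv 1 h1' h hv.2
    have e1 := (hu u₁ h1).2
    have e2 := (hu u₂ h2).2
    linarith

/-- vertical increments -/
lemma cop_vert (hC : IsCopula C) {v₁ v₂ u : ℝ} (h1 : v₁ ∈ Icc (0:ℝ) 1)
    (h2 : v₂ ∈ Icc (0:ℝ) 1) (hu : u ∈ Icc (0:ℝ) 1) (h : v₁ ≤ v₂) :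
    C u v₁ ≤ C u v₂ ∧ C u v₂ - C u v₁ ≤ v₂ - v₁ := by
  obtain ⟨hb, hu', hv', hrect⟩ := hC
  have h0 : (0:ℝ) ∈ Icc (0:ℝ) 1 := by norm_num
  have h1' : (1:ℝ) ∈ Icc (0:ℝ) 1 := by norm_num
  constructor
  · have := hrect 0 h0 u hu v₁ h1 v₂ h2 hu.1 h
    have e1 := (hv' v₁ h1).1
    have e2 := (hv' v₂ h2).1
    linarith
  · have := hrect u hu 1 h1' v₁ h1 v₂ h2 hu.2 h
    have e1 := (hv' v₁ h1).2
    have e2 := (hv' v₂ h2).2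
    linarith

/-- the clamped copula -/
def Cc (C : ℝ → ℝ → ℝ) (s v : ℝ) : ℝ := C (cl s) (cl v)

lemma Cc_mono (hC : IsCopula C) (v : ℝ) : Monotone (fun s => Cc C s v) := by
  intro x y hxy
  exact (cop_horiz hC (cl_mem x) (cl_mem y) (cl_mem v) (cl_mono hxy)).1

lemma Cc_horiz_abs (hC : IsCopula C) (v x y : ℝ) :
    |Cc C x v - Cc C y v| ≤ |x - y| := by
  rcases le_total (cl y) (cl x) with h | h
  · have h2 := cop_horiz hC (cl_mem y) (cl_mem x) (cl_mem v) h
    rw [abs_sub_le_iff]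
    constructor
    · refine h2.2.trans ?_
      calc cl x - cl y ≤ |cl x - cl y| := le_abs_self _
        _ ≤ |x - y| := cl_abs x y
    · have h3 : Cc C y v - Cc C x v ≤ 0 := by simp only [Cc]; linarith [h2.1]
      exact h3.trans (abs_nonneg _)
  · have h2 := cop_horiz hC (cl_mem x) (cl_mem y) (cl_mem v) h
    rw [abs_sub_le_iff]
    constructor
    · have h3 : Cc C x v - Cc C y v ≤ 0 := by simp only [Cc]; linarith [h2.1]
      exact h3.trans (abs_nonneg _)
    · refine h2.2.trans ?_
      calc cl y - cl x ≤ |cl y - cl x| := le_abs_self _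
        _ ≤ |y - x| := cl_abs y x
        _ = |x - y| := abs_sub_comm _ _

lemma Cc_lip (hC : IsCopula C) (v : ℝ) : LipschitzWith 1 (fun s => Cc C s v) := by
  refine LipschitzWith.of_dist_le_mul fun x y => ?_
  rw [Real.dist_eq, Real.dist_eq, NNReal.coe_one, one_mul]
  exact Cc_horiz_abs hC v x y

lemma Cc_vert_abs (hC : IsCopula C) (u x y : ℝ) :
    |Cc C u x - Cc C u y| ≤ |x - y| := by
  rcases le_total (cl y) (cl x) with h | h
  · have h2 := cop_vert hC (cl_mem y) (cl_mem x) (cl_mem u) h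
    rw [abs_sub_le_iff]
    constructor
    · refine h2.2.trans ?_
      calc cl x - cl y ≤ |cl x - cl y| := le_abs_self _
        _ ≤ |x - y| := cl_abs x y
    · have h3 : Cc C u y - Cc C u x ≤ 0 := by simp only [Cc]; linarith [h2.1]
      exact h3.trans (abs_nonneg _)
  · have h2 := cop_vert hC (cl_mem x) (cl_mem y) (cl_mem u) h
    rw [abs_sub_le_iff]
    constructor
    · have h3 : Cc C u x - Cc C u y ≤ 0 := by simp only [Cc]; linarith [h2.1]
      exact h3.trans (abs_nonneg _)
    · refine h2.2.trans ?_
      calc cl y - cl x ≤ |cl y - cl x| := le_abs_self _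
        _ ≤ |y - x| := cl_abs y x
        _ = |x - y| := abs_sub_comm _ _

lemma Cc_cont (hC : IsCopula C) : Continuous (fun p : ℝ × ℝ => Cc C p.2 p.1) := by
  refine (LipschitzWith.of_dist_le_mul (K := 2) fun p q => ?_).continuous
  rw [Real.dist_eq]
  calc |Cc C p.2 p.1 - Cc C q.2 q.1|
      ≤ |Cc C p.2 p.1 - Cc C q.2 p.1| + |Cc C q.2 p.1 - Cc C q.2 q.1| := abs_sub_le _ _ _
    _ ≤ |p.2 - q.2| + |p.1 - q.1| := add_le_add (Cc_horiz_abs hC _ _ _) (Cc_vert_abs hC _ _ _)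
    _ ≤ dist p q + dist p q := by
        rw [Prod.dist_eq]
        exact add_le_add (by rw [← Real.dist_eq]; exact le_max_right _ _)
          (by rw [← Real.dist_eq]; exact le_max_left _ _)
    _ = 2 * dist p q := by push_cast; ring

/-- partial derivative of the clamped copula -/
def Dc (C : ℝ → ℝ → ℝ) (v t : ℝ) : ℝ := deriv (fun s => Cc C s v) t

lemma Dc_mem (hC : IsCopula C) (v t : ℝ) : Dc C v t ∈ Icc (0:ℝ) 1 :=
  lip_deriv_mem (Cc_mono hC v) (Cc_lip hC v) t

lemma Dc_meas (hC : IsCopula C) : Measurable (fun p : ℝ × ℝ => Dc C p.1 p.2) :=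
  measurable_deriv_with_param (f := fun v s => Cc C s v) (Cc_cont hC)

lemma Dc_ftc (hC : IsCopula C) (v : ℝ) {a b : ℝ} (hab : a ≤ b) :
    ∫ t in a..b, Dc C v t = Cc C b v - Cc C a v :=
  mono_lip_integral_deriv_eq (Cc_mono hC v) (Cc_lip hC v) hab

lemma d1_eq_Dc (hC : IsCopula C) {v t : ℝ} (hv : v ∈ Icc (0:ℝ) 1) (ht : t ∈ Ioo (0:ℝ) 1) :
    d1 C t v = Dc C v t := by
  have hEq : (fun s => C s v) =ᶠ[nhds t] (fun s => Cc C s v) := by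
    filter_upwards [Ioo_mem_nhds ht.1 ht.2] with s hs
    rw [Cc, cl_eq ⟨hs.1.le, hs.2.le⟩, cl_eq hv]
  exact hEq.deriv_eq

instance : IsFiniteMeasure (volume.restrict (Ioc (0:ℝ) 1)) :=
  ⟨by rw [Measure.restrict_apply_univ, Real.volume_Ioc]; exact ENNReal.ofReal_lt_top⟩

lemma vol_Ioc01 : ((volume.restrict (Ioc (0:ℝ) 1)) univ).toReal = 1 := by
  rw [Measure.restrict_apply_univ, Real.volume_Ioc]; norm_num

/-- inner square integral -/
def Jf (C : ℝ → ℝ → ℝ) (v : ℝ) : ℝ := ∫ t in Ioc (0:ℝ) 1, (Dc C v t)^2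

lemma Dc_meas_v (C : ℝ → ℝ → ℝ) (v : ℝ) : Measurable (fun t => Dc C v t) :=
  measurable_deriv _

lemma Dc_int (hC : IsCopula C) (v : ℝ) :
    Integrable (fun t => Dc C v t) (volume.restrict (Ioc (0:ℝ) 1)) := by
  refine int_bdd (Dc_meas_v C v).aestronglyMeasurable (M := 1) fun t => ?_
  have h := Dc_mem hC v t
  rw [abs_le]; exact ⟨by linarith [h.1], h.2⟩

lemma Dc_sq_int (hC : IsCopula C) (v : ℝ) :
    Integrable (fun t => (Dc C v t)^2) (volume.restrict (Ioc (0:ℝ) 1)) := by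
  refine int_bdd ((Dc_meas_v C v).pow_const 2).aestronglyMeasurable (M := 1) fun t => ?_
  have h := Dc_mem hC v t
  rw [abs_le]
  exact ⟨by nlinarith [sq_nonneg (Dc C v t)], pow_le_one₀ h.1 h.2⟩

lemma Jf_mem (hC : IsCopula C) (v : ℝ) : Jf C v ∈ Icc (0:ℝ) 1 := by
  constructor
  · exact setIntegral_nonneg measurableSet_Ioc fun t _ => sq_nonneg _
  · have h2 : Jf C v ≤ ∫ _ in Ioc (0:ℝ) 1, (1:ℝ) := by
      refine integral_mono (Dc_sq_int hC v) (integrable_const 1) fun t => ?_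
      have h := Dc_mem hC v t
      exact pow_le_one₀ h.1 h.2
    have h3 : ∫ _ in Ioc (0:ℝ) 1, (1:ℝ) = 1 := by
      rw [integral_const, smul_eq_mul, measureReal_def, vol_Ioc01, mul_one]
    linarith

lemma Jf_meas (hC : IsCopula C) : Measurable (Jf C) := by
  have h1 : StronglyMeasurable (fun p : ℝ × ℝ => (Dc C p.1 p.2)^2) :=
    ((Dc_meas hC).pow_const 2).stronglyMeasurable
  exact h1.integral_prod_right'.measurable

lemma Dc_ftc1 (hC : IsCopula C) {v : ℝ} (hv : v ∈ Icc (0:ℝ) 1) :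
    ∫ t in Ioc (0:ℝ) 1, Dc C v t = v := by
  have h := Dc_ftc hC v zero_le_one
  rw [intervalIntegral.integral_of_le zero_le_one] at h
  rw [h, Cc, Cc, cl_eq hv, cl_eq (by norm_num : (1:ℝ) ∈ Icc (0:ℝ) 1),
    cl_eq (by norm_num : (0:ℝ) ∈ Icc (0:ℝ) 1), (hC.2.2.1 v hv).1, (hC.2.2.1 v hv).2, sub_zero]

lemma Dc_ftcv (hC : IsCopula C) {v : ℝ} (hv : v ∈ Icc (0:ℝ) 1) :
    ∫ t in Ioc (0:ℝ) v, Dc C v t = C v v := by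
  have h := Dc_ftc hC v hv.1
  rw [intervalIntegral.integral_of_le hv.1] at h
  rw [h, Cc, Cc, cl_eq hv, cl_eq (by norm_num : (0:ℝ) ∈ Icc (0:ℝ) 1),
    (hC.2.2.1 v hv).1, sub_zero]

lemma part1 (hC : IsCopula C) {v : ℝ} (hv : v ∈ Icc (0:ℝ) 1) : v^2 ≤ Jf C v := by
  have hcs := cs_bdd (μ := volume.restrict (Ioc (0:ℝ) 1)) (f := fun _ => (1:ℝ))
    (g := fun t => Dc C v t) aestronglyMeasurable_const
    (Dc_meas_v C v).aestronglyMeasurable (fun x => by norm_num)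
    (fun t => by
      have h := Dc_mem hC v t
      rw [abs_le]; exact ⟨by linarith [h.1], h.2⟩)
  simp only [one_mul, one_pow] at hcs
  rw [Dc_ftc1 hC hv] at hcs
  have h1 : ∫ _ in Ioc (0:ℝ) 1, (1:ℝ) = 1 := by
    rw [integral_const, smul_eq_mul, measureReal_def, vol_Ioc01, mul_one]
  rw [h1, Real.sqrt_one, one_mul] at hcs
  calc v^2 = v * v := sq v
    _ ≤ Real.sqrt (Jf C v) * Real.sqrt (Jf C v) :=
        mul_le_mul hcs hcs hv.1 (Real.sqrt_nonneg _)
    _ = Jf C v := Real.mul_self_sqrt (Jf_mem hC v).1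

lemma inner_eq (hC : IsCopula C) {v : ℝ} (hv : v ∈ Icc (0:ℝ) 1) :
    ∫ t in (0:ℝ)..1, (d1 C t v)^2 = Jf C v := by
  rw [intervalIntegral.integral_of_le zero_le_one]
  calc ∫ t in Ioc (0:ℝ) 1, (d1 C t v)^2
      = ∫ t in Ioo (0:ℝ) 1, (d1 C t v)^2 := by
        rw [Measure.restrict_congr_set Ioo_ae_eq_Ioc]
    _ = ∫ t in Ioo (0:ℝ) 1, (Dc C v t)^2 := by
        refine setIntegral_congr_fun measurableSet_Ioo fun t ht => ?_
        rw [d1_eq_Dc hC hv ht]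
    _ = Jf C v := by rw [Measure.restrict_congr_set Ioo_ae_eq_Ioc]; rfl

lemma xi_eq (hC : IsCopula C) : xi C = 6 * (∫ v in Ioc (0:ℝ) 1, Jf C v) - 2 := by
  rw [xi, intervalIntegral.integral_of_le zero_le_one]
  have h : ∫ v in Ioc (0:ℝ) 1, (∫ t in (0:ℝ)..1, (d1 C t v)^2)
      = ∫ v in Ioc (0:ℝ) 1, Jf C v :=
    setIntegral_congr_fun measurableSet_Ioc fun v hv => inner_eq hC ⟨hv.1.le, hv.2⟩
  rw [h]

lemma Jf_int (hC : IsCopula C) :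
    Integrable (Jf C) (volume.restrict (Ioc (0:ℝ) 1)) := by
  refine int_bdd (Jf_meas hC).aestronglyMeasurable (M := 1) fun v => ?_
  have h := Jf_mem hC v
  rw [abs_le]; exact ⟨by linarith [h.1], h.2⟩

lemma sq_Ioc : ∫ v in Ioc (0:ℝ) 1, v^2 = 1/3 := by
  rw [← intervalIntegral.integral_of_le zero_le_one]
  norm_num [integral_pow]

lemma xi_nonneg (hC : IsCopula C) : 0 ≤ xi C := by
  rw [xi_eq hC]
  have h1 : ∫ v in Ioc (0:ℝ) 1, v^2 ≤ ∫ v in Ioc (0:ℝ) 1, Jf C v := by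
    refine setIntegral_mono_on ?_ (Jf_int hC) measurableSet_Ioc
      fun v hv => part1 hC ⟨hv.1.le, hv.2⟩
    exact (continuous_pow 2).integrableOn_Ioc
  rw [sq_Ioc] at h1
  linarith

lemma part2 (hC : IsCopula C) {v : ℝ} (hv : v ∈ Icc (0:ℝ) 1) :
    C v v - v^2 ≤ Real.sqrt (v*(1-v)) * Real.sqrt (Jf C v - v^2) := by
  have hμ := (inferInstance : IsFiniteMeasure (volume.restrict (Ioc (0:ℝ) 1)))
  set φ : ℝ → ℝ := (Ioc (0:ℝ) v).indicator (fun _ => (1:ℝ)) with hφdef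
  set f : ℝ → ℝ := fun t => φ t - v with hfdef
  set g : ℝ → ℝ := fun t => Dc C v t - v with hgdef
  have hφm : Measurable φ := measurable_const.indicator measurableSet_Ioc
  have hφ01 : ∀ t, φ t = 0 ∨ φ t = 1 := fun t => by
    by_cases h : t ∈ Ioc (0:ℝ) v
    · right; simp [hφdef, Set.indicator_of_mem h]
    · left; simp [hφdef, Set.indicator_of_notMem h]
  have hfm : Measurable f := hφm.sub measurable_const
  have hgm : Measurable g := (Dc_meas_v C v).sub measurable_const
  have hfb : ∀ t, |f t| ≤ 1 := fun t => by
    rcases hφ01 t with h | h <;> rw [hfdef] <;> simp only [h] <;> rw [abs_le] <;>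
      constructor <;> linarith [hv.1, hv.2]
  have hgb : ∀ t, |g t| ≤ 1 := fun t => by
    have h := Dc_mem hC v t
    rw [hgdef]; simp only []; rw [abs_le]
    constructor <;> simp <;> linarith [h.1, h.2, hv.1, hv.2]
  have hsub : Ioc (0:ℝ) v ⊆ Ioc (0:ℝ) 1 := Ioc_subset_Ioc_right hv.2
  have hrr : (volume.restrict (Ioc (0:ℝ) 1)).restrict (Ioc (0:ℝ) v)
      = volume.restrict (Ioc (0:ℝ) v) := by
    rw [Measure.restrict_restrict measurableSet_Ioc, inter_eq_self_of_subset_left hsub]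
  have hvolv : ((volume (Ioc (0:ℝ) v))).toReal = v := by
    rw [Real.volume_Ioc, sub_zero, ENNReal.toReal_ofReal hv.1]
  have hint1 : ∀ c : ℝ, ∫ _ in Ioc (0:ℝ) 1, c = c := fun c => by
    rw [integral_const, smul_eq_mul, measureReal_def, vol_Ioc01, one_mul]
  have hintφ : ∫ t in Ioc (0:ℝ) 1, φ t = v := by
    rw [hφdef, integral_indicator measurableSet_Ioc, hrr, integral_const, smul_eq_mul,
      measureReal_def, Measure.restrict_apply_univ, hvolv, mul_one]
  have hintD : ∫ t in Ioc (0:ℝ) 1, Dc C v t = v := Dc_ftc1 hC hv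
  have hgint : Integrable g (volume.restrict (Ioc (0:ℝ) 1)) :=
    (Dc_int hC v).sub (integrable_const v)
  have hintg : ∫ t in Ioc (0:ℝ) 1, g t = 0 := by
    rw [hgdef, integral_sub (Dc_int hC v) (integrable_const v), hintD, hint1, sub_self]
  have hφgint : Integrable (fun t => φ t * g t) (volume.restrict (Ioc (0:ℝ) 1)) := by
    refine int_bdd (hφm.mul hgm).aestronglyMeasurable (M := 1) fun t => ?_
    rw [abs_mul]
    calc |φ t| * |g t| ≤ 1 * 1 := by
          refine mul_le_mul ?_ (hgb t) (abs_nonneg _) zero_le_one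
          rcases hφ01 t with h | h <;> rw [h] <;> norm_num
      _ = 1 := one_mul _
  have hDvint : Integrable (fun t => Dc C v t) (volume.restrict (Ioc (0:ℝ) v)) := by
    refine int_bdd (Dc_meas_v C v).aestronglyMeasurable (M := 1) fun t => ?_
    have h := Dc_mem hC v t
    rw [abs_le]; exact ⟨by linarith [h.1], h.2⟩
  have hintφg : ∫ t in Ioc (0:ℝ) 1, φ t * g t = C v v - v*v := by
    have he : (fun t => φ t * g t) = (Ioc (0:ℝ) v).indicator g := by
      funext t
      by_cases h : t ∈ Ioc (0:ℝ) v
      · simp [hφdef, Set.indicator_of_mem h]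
      · simp [hφdef, Set.indicator_of_notMem h]
    rw [he, integral_indicator measurableSet_Ioc, hrr, hgdef,
      integral_sub hDvint (integrable_const v), Dc_ftcv hC hv, integral_const, smul_eq_mul,
      measureReal_def, Measure.restrict_apply_univ, hvolv]
  have hfg : ∫ t in Ioc (0:ℝ) 1, f t * g t = C v v - v^2 := by
    have he : (fun t => f t * g t) = (fun t => φ t * g t - v * g t) := by
      funext t; rw [hfdef]; ring
    rw [he, integral_sub hφgint (hgint.const_mul v), hintφg, integral_const_mul, hintg,
      mul_zero, sub_zero, sq]
  have hf2 : ∫ t in Ioc (0:ℝ) 1, f t ^ 2 = v*(1-v) := by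
    have he : (fun t => f t ^ 2) = (fun t => φ t * (1 - 2*v) + v^2) := by
      funext t
      rcases hφ01 t with h | h <;> rw [hfdef] <;> simp only [h] <;> ring
    have hi : Integrable (fun t => φ t * (1 - 2*v)) (volume.restrict (Ioc (0:ℝ) 1)) := by
      refine int_bdd (hφm.mul measurable_const).aestronglyMeasurable
        (M := |1 - 2*v|) fun t => ?_
      rw [abs_mul]
      rcases hφ01 t with h | h <;> rw [h] <;> simp [abs_nonneg]
    rw [he, integral_add hi (integrable_const _), integral_mul_const, hintφ, hint1]
    ring
  have hg2 : ∫ t in Ioc (0:ℝ) 1, g t ^ 2 = Jf C v - v^2 := by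
    have he : (fun t => g t ^ 2)
        = (fun t => ((Dc C v t)^2 - (2*v) * Dc C v t) + v^2) := by
      funext t; rw [hgdef]; ring
    have hsubint : Integrable (fun t => (Dc C v t)^2 - (2*v) * Dc C v t)
        (volume.restrict (Ioc (0:ℝ) 1)) :=
      (Dc_sq_int hC v).sub ((Dc_int hC v).const_mul (2*v))
    have h0 : ∫ t in Ioc (0:ℝ) 1, (Dc C v t)^2 = Jf C v := rfl
    have h1 : ∫ t in Ioc (0:ℝ) 1, ((Dc C v t)^2 - (2*v) * Dc C v t)
        = Jf C v - (2*v)*v := by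
      rw [integral_sub (Dc_sq_int hC v) ((Dc_int hC v).const_mul (2*v)), h0,
        integral_const_mul, hintD]
    rw [he, integral_add hsubint (integrable_const _), h1, hint1]
    ring
  have hcs := cs_bdd (μ := volume.restrict (Ioc (0:ℝ) 1))
    hfm.aestronglyMeasurable hgm.aestronglyMeasurable hfb hgb
  rw [hfg, hf2, hg2] at hcs
  exact hcs

lemma psi_le (hC : IsCopula C) : psi C ≤ Real.sqrt (xi C) := by
  have hCvv_cont : Continuous (fun v => Cc C v v) :=
    (Cc_cont hC).comp (continuous_id.prodMk continuous_id)
  have hCvv_int : IntegrableOn (fun v => C v v) (Ioc (0:ℝ) 1) volume := by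
    refine (hCvv_cont.integrableOn_Ioc).congr_fun (fun v hv => ?_) measurableSet_Ioc
    show Cc C v v = C v v
    rw [Cc, cl_eq ⟨hv.1.le, hv.2⟩]
  have hsq_int : IntegrableOn (fun v : ℝ => v^2) (Ioc (0:ℝ) 1) volume :=
    (continuous_pow 2).integrableOn_Ioc
  -- the two factor functions
  set F1 : ℝ → ℝ := fun v => Real.sqrt (v*(1-v)) with hF1def
  set F2 : ℝ → ℝ := fun v => Real.sqrt (Jf C v - v^2) with hF2def
  have hF1m : Measurable F1 :=
    Real.continuous_sqrt.measurable.comp (by fun_prop)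
  have hF2m : Measurable F2 :=
    Real.continuous_sqrt.measurable.comp ((Jf_meas hC).sub (by fun_prop))
  have hF1b : ∀ v, |F1 v| ≤ 1 := fun v => by
    rw [hF1def, abs_of_nonneg (Real.sqrt_nonneg _)]
    exact Real.sqrt_le_one.2 (by nlinarith [sq_nonneg (v - 1/2)])
  have hF2b : ∀ v, |F2 v| ≤ 1 := fun v => by
    rw [hF2def, abs_of_nonneg (Real.sqrt_nonneg _)]
    exact Real.sqrt_le_one.2 (by nlinarith [(Jf_mem hC v).2, sq_nonneg v])
  have hprod_int : Integrable (fun v => F1 v * F2 v) (volume.restrict (Ioc (0:ℝ) 1)) := by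
    refine int_bdd (hF1m.mul hF2m).aestronglyMeasurable (M := 1) fun v => ?_
    rw [abs_mul]
    calc |F1 v| * |F2 v| ≤ 1 * 1 :=
          mul_le_mul (hF1b v) (hF2b v) (abs_nonneg _) zero_le_one
      _ = 1 := one_mul _
  -- step C : pointwise bound integrated
  have hstepC : ∫ v in Ioc (0:ℝ) 1, (C v v - v^2) ≤ ∫ v in Ioc (0:ℝ) 1, F1 v * F2 v := by
    refine setIntegral_mono_on (hCvv_int.sub hsq_int) hprod_int measurableSet_Ioc
      fun v hv => ?_
    exact part2 hC ⟨hv.1.le, hv.2⟩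
  -- step D : Cauchy-Schwarz
  have hstepD : ∫ v in Ioc (0:ℝ) 1, F1 v * F2 v
      ≤ Real.sqrt (∫ v in Ioc (0:ℝ) 1, F1 v ^ 2) * Real.sqrt (∫ v in Ioc (0:ℝ) 1, F2 v ^ 2) :=
    cs_bdd (μ := volume.restrict (Ioc (0:ℝ) 1)) hF1m.aestronglyMeasurable
      hF2m.aestronglyMeasurable hF1b hF2b
  -- the two square integrals
  have hF1sq : ∫ v in Ioc (0:ℝ) 1, F1 v ^ 2 = 1/6 := by
    have he : ∫ v in Ioc (0:ℝ) 1, F1 v ^ 2 = ∫ v in Ioc (0:ℝ) 1, (v - v^2) := by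
      refine setIntegral_congr_fun measurableSet_Ioc fun v hv => ?_
      rw [hF1def]
      rw [Real.sq_sqrt (by nlinarith [hv.1, hv.2] : (0:ℝ) ≤ v*(1-v))]
      ring
    rw [he, ← intervalIntegral.integral_of_le zero_le_one,
      intervalIntegral.integral_sub (continuous_id'.intervalIntegrable 0 1)
        ((continuous_pow 2).intervalIntegrable 0 1)]
    rw [integral_id, integral_pow]
    norm_num
  have hJf_Ioc : ∫ v in Ioc (0:ℝ) 1, Jf C v = (xi C + 2)/6 := by
    have := xi_eq hC
    linarith
  have hF2sq : ∫ v in Ioc (0:ℝ) 1, F2 v ^ 2 = xi C / 6 := by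
    have he : ∫ v in Ioc (0:ℝ) 1, F2 v ^ 2 = ∫ v in Ioc (0:ℝ) 1, (Jf C v - v^2) := by
      refine setIntegral_congr_fun measurableSet_Ioc fun v hv => ?_
      rw [hF2def]
      exact Real.sq_sqrt (by linarith [part1 hC ⟨hv.1.le, hv.2⟩])
    rw [he, integral_sub (Jf_int hC) hsq_int, sq_Ioc, hJf_Ioc]
    ring
  -- assemble
  have hpsi : psi C = 6 * ∫ v in Ioc (0:ℝ) 1, (C v v - v^2) := by
    rw [psi, intervalIntegral.integral_of_le zero_le_one,
      integral_sub hCvv_int hsq_int, sq_Ioc]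
    ring
  have hfinal : Real.sqrt (1/6) * Real.sqrt (xi C / 6) = Real.sqrt (xi C) / 6 := by
    rw [← Real.sqrt_mul (by norm_num : (0:ℝ) ≤ 1/6)]
    have : (1/6 : ℝ) * (xi C / 6) = xi C / 36 := by ring
    rw [this, Real.sqrt_div (xi_nonneg hC), show (36:ℝ) = 6^2 by norm_num,
      Real.sqrt_sq (by norm_num : (0:ℝ) ≤ 6)]
  calc psi C = 6 * ∫ v in Ioc (0:ℝ) 1, (C v v - v^2) := hpsi
    _ ≤ 6 * (∫ v in Ioc (0:ℝ) 1, F1 v * F2 v) := by linarith [hstepC]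
    _ ≤ 6 * (Real.sqrt (∫ v in Ioc (0:ℝ) 1, F1 v ^ 2)
        * Real.sqrt (∫ v in Ioc (0:ℝ) 1, F2 v ^ 2)) := by linarith [hstepD]
    _ = 6 * (Real.sqrt (1/6) * Real.sqrt (xi C / 6)) := by rw [hF1sq, hF2sq]
    _ = Real.sqrt (xi C) := by rw [hfinal]; ring

end Main

/-- For every bivariate copula `C`, `0 ≤ ξ(C)` and `ψ(C) ≤ √(ξ(C))`. -/
theorem xi_nonneg_and_psi_le_sqrt_xi (C : ℝ → ℝ → ℝ) (hC : IsCopula C) :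
    0 ≤ xi C ∧ psi C ≤ Real.sqrt (xi C) :=
  ⟨xi_nonneg hC, psi_le hC⟩
end
end

section
/- For every α ∈ [0,1], the Fréchet copula C^Fr_α is a bivariate copula with ξ(C^Fr_α) = α² and ψ(C^Fr_α) = α. Consequently, for every x ∈ [0,1], the maximum of ψ(C) over all bivariate copulas C with ξ(C) = x equals √x. -/
open MeasureTheory Set

noncomputable section

/-- The Fréchet copula `C^Fr_α(u,v) = (1-α)uv + α·min(u,v)`. -/
def frechet (α : ℝ) (u v : ℝ) : ℝ := (1 - α) * u * v + α * min u v


-- ### Auxiliary lemmas ###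




lemma intInt_bdd {φ : ℝ → ℝ} (hm : Measurable φ) {M : ℝ} (hb : ∀ t, |φ t| ≤ M) (a b : ℝ) :
    IntervalIntegrable φ volume a b := by
  constructor <;>
  · refine (integrable_const M).mono' hm.aestronglyMeasurable ?_
    exact Filter.Eventually.of_forall fun t => (Real.norm_eq_abs _ ▸ hb t)

lemma deriv_abs_le {f : ℝ → ℝ} (hl : LipschitzWith 1 f) (t : ℝ) : |deriv f t| ≤ 1 := by
  simpa using norm_deriv_le_of_lipschitz hl (x₀ := t)

/-- FTC for monotone Lipschitz functions. -/
lemma ftc_lip {f : ℝ → ℝ} (hm : Monotone f) (hl : LipschitzWith 1 f) (a b : ℝ) :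
    ∫ t in a..b, deriv f t = f b - f a := by
  have hcont : Continuous f := hl.continuous
  set φ : ℕ → ℝ → ℝ := fun n t => (n+1 : ℝ) * (f (t + 1/(n+1)) - f t) with hφ
  have hbd : ∀ n t, |φ n t| ≤ 1 := by
    intro n t
    have h1 : (0:ℝ) < (n+1 : ℝ) := by positivity
    have := hl.dist_le_mul (t + 1/(n+1)) t
    rw [Real.dist_eq, Real.dist_eq] at this
    simp only [hφ, abs_mul, abs_of_pos h1]
    calc (n+1:ℝ) * |f (t + 1/(n+1)) - f t| ≤ (n+1:ℝ) * |t + 1/(n+1) - t| := by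
          exact mul_le_mul_of_nonneg_left (by push_cast at this; linarith) h1.le
      _ = 1 := by
          rw [show t + 1/(n+1) - t = 1/(n+1) by ring, abs_of_pos (by positivity)]
          field_simp
  -- a.e. convergence
  have hae : ∀ᵐ t, Filter.Tendsto (fun n => φ n t) Filter.atTop (nhds (deriv f t)) := by
    filter_upwards [hm.ae_hasDerivAt] with t ht
    have hd : HasDerivAt f (deriv f t) t := ht.deriv ▸ ht
    have hslope := hasDerivAt_iff_tendsto_slope.1 hd
    have htend : Filter.Tendsto (fun n : ℕ => t + 1/(n+1)) Filter.atTop (nhdsWithin t {t}ᶜ) := by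
      apply tendsto_nhdsWithin_of_tendsto_nhds_of_eventually_within
      · have : Filter.Tendsto (fun n : ℕ => (1:ℝ)/(n+1)) Filter.atTop (nhds 0) :=
          tendsto_one_div_add_atTop_nhds_zero_nat
        simpa using (tendsto_const_nhds.add this)
      · refine Filter.Eventually.of_forall fun n => ?_
        have h0 : (0:ℝ) < 1/(n+1) := by positivity
        simp only [mem_compl_iff, mem_singleton_iff]
        intro hh; linarith
    have := hslope.comp htend
    convert this using 2 with n
    simp only [Function.comp, slope, hφ]
    rw [show t + 1/(n+1) - t = 1/(n+1) by ring]
    field_simp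
    simp only [vsub_eq_sub, smul_eq_mul]
  -- key: convergence of shifted averages at a point
  have haux : ∀ x : ℝ, Filter.Tendsto
      (fun n : ℕ => (n+1:ℝ) * ∫ t in x..(x+1/(n+1)), f t) Filter.atTop (nhds (f x)) := by
    intro x
    rw [tendsto_iff_dist_tendsto_zero]
    apply squeeze_zero (fun n => dist_nonneg) (g := fun n : ℕ => (1:ℝ)/(n+1))
    · intro n
      have h1 : (0:ℝ) < (n+1 : ℝ) := by positivity
      have hc : (0:ℝ) < 1/(n+1) := by positivity
      have hint : IntervalIntegrable f volume x (x + 1/(n+1)) :=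
        hcont.intervalIntegrable _ _
      have hconst : ∫ t in x..(x+1/(n+1)), f x = (1/(n+1:ℝ)) * f x := by
        rw [intervalIntegral.integral_const, smul_eq_mul]; ring_nf
      have hsub : (∫ t in x..(x+1/(n+1)), f t) - (1/(n+1:ℝ)) * f x
          = ∫ t in x..(x+1/(n+1)), (f t - f x) := by
        rw [intervalIntegral.integral_sub hint (intervalIntegrable_const), hconst]
      have hbound : ‖∫ t in x..(x+1/(n+1)), (f t - f x)‖ ≤ (1/(n+1:ℝ)) * |x + 1/(n+1) - x| := by
        apply intervalIntegral.norm_integral_le_of_norm_le_const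
        intro t ht
        rw [Set.uIoc_of_le (by linarith)] at ht
        have := hl.dist_le_mul t x
        rw [Real.dist_eq, Real.dist_eq] at this
        rw [Real.norm_eq_abs]
        calc |f t - f x| ≤ 1 * |t - x| := by push_cast at this; linarith
          _ ≤ 1/(n+1:ℝ) := by
              rw [one_mul, abs_of_pos (by linarith [ht.1])]
              linarith [ht.2]
      rw [Real.dist_eq]
      have : (n+1:ℝ) * (∫ t in x..(x+1/(n+1)), f t) - f x
          = (n+1:ℝ) * ((∫ t in x..(x+1/(n+1)), f t) - (1/(n+1:ℝ)) * f x) := by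
        field_simp
      rw [this, hsub, abs_mul, abs_of_pos h1]
      rw [Real.norm_eq_abs] at hbound
      calc (n+1:ℝ) * |∫ t in x..(x+1/(n+1)), (f t - f x)|
          ≤ (n+1:ℝ) * ((1/(n+1:ℝ)) * |x + 1/(n+1) - x|) :=
            mul_le_mul_of_nonneg_left hbound h1.le
        _ = (1:ℝ)/(n+1) := by
            rw [show x + 1/(n+1:ℝ) - x = 1/(n+1) by ring, abs_of_pos (by positivity)]
            field_simp
    · exact tendsto_one_div_add_atTop_nhds_zero_nat
  -- value of ∫ φ n
  have hshift : ∀ n : ℕ, (∫ t in a..b, φ n t)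
      = (n+1:ℝ) * ((∫ t in b..(b+1/(n+1)), f t) - ∫ t in a..(a+1/(n+1)), f t) := by
    intro n
    have hint : IntervalIntegrable f volume a b := hcont.intervalIntegrable _ _
    have hint2 : IntervalIntegrable (fun t => f (t + 1/(n+1))) volume a b :=
      (hcont.comp (by continuity)).intervalIntegrable _ _
    have e1 : (∫ t in a..b, φ n t)
        = (n+1:ℝ) * ((∫ t in a..b, f (t + 1/(n+1))) - ∫ t in a..b, f t) := by
      rw [← intervalIntegral.integral_sub hint2 hint, ← intervalIntegral.integral_const_mul]
    have e2 : (∫ t in a..b, f (t + 1/(n+1))) = ∫ t in (a+1/(n+1))..(b+1/(n+1)), f t :=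
      intervalIntegral.integral_comp_add_right _ _
    have e3 : (∫ t in a..(a+1/(n+1)), f t) + (∫ t in (a+1/(n+1))..(b+1/(n+1)), f t)
        = ∫ t in a..(b+1/(n+1)), f t :=
      intervalIntegral.integral_add_adjacent_intervals (hcont.intervalIntegrable _ _)
        (hcont.intervalIntegrable _ _)
    have e4 : (∫ t in a..b, f t) + (∫ t in b..(b+1/(n+1)), f t)
        = ∫ t in a..(b+1/(n+1)), f t :=
      intervalIntegral.integral_add_adjacent_intervals (hcont.intervalIntegrable _ _)
        (hcont.intervalIntegrable _ _)
    rw [e1, e2]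
    have e5 : (∫ t in (a+1/(n+1))..(b+1/(n+1)), f t) - (∫ t in a..b, f t)
        = (∫ t in b..(b+1/(n+1)), f t) - ∫ t in a..(a+1/(n+1)), f t := by linarith
    linear_combination ((n:ℝ)+1) * e5
  have hDCT : Filter.Tendsto (fun n : ℕ => ∫ t in a..b, φ n t) Filter.atTop
      (nhds (∫ t in a..b, deriv f t)) := by
    apply intervalIntegral.tendsto_integral_filter_of_dominated_convergence
      (bound := fun _ => (1:ℝ))
    · refine Filter.Eventually.of_forall fun n => ?_
      exact ((continuous_const.mul ((hcont.comp (by continuity)).sub hcont))).aestronglyMeasurable.restrict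
    · refine Filter.Eventually.of_forall fun n => Filter.Eventually.of_forall fun t => fun _ => ?_
      simpa [Real.norm_eq_abs] using hbd n t
    · exact intervalIntegrable_const
    · filter_upwards [hae] with t ht using fun _ => ht
  have heq : (fun n : ℕ => ∫ t in a..b, φ n t)
      = fun n : ℕ => (n+1:ℝ)*(∫ t in b..(b+1/(n+1)), f t)
        - (n+1:ℝ)*(∫ t in a..(a+1/(n+1)), f t) := by
    funext n; rw [hshift n]; ring
  rw [heq] at hDCT
  exact tendsto_nhds_unique hDCT ((haux b).sub (haux a))



lemma copula_u_bounds {C : ℝ → ℝ → ℝ} (hC : IsCopula C) {u₁ u₂ v : ℝ}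
    (h1 : u₁ ∈ Icc (0:ℝ) 1) (h2 : u₂ ∈ Icc (0:ℝ) 1) (hv : v ∈ Icc (0:ℝ) 1) (h12 : u₁ ≤ u₂) :
    C u₁ v ≤ C u₂ v ∧ C u₂ v - C u₁ v ≤ u₂ - u₁ := by
  obtain ⟨hr, hu, hvb, hrect⟩ := hC
  have h0 : (0:ℝ) ∈ Icc (0:ℝ) 1 := ⟨le_refl 0, zero_le_one⟩
  have h1' : (1:ℝ) ∈ Icc (0:ℝ) 1 := ⟨zero_le_one, le_refl 1⟩
  constructor
  · have := hrect u₁ h1 u₂ h2 0 h0 v hv h12 hv.1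
    have e1 := (hu u₁ h1).1; have e2 := (hu u₂ h2).1
    linarith
  · have := hrect u₁ h1 u₂ h2 v hv 1 h1' h12 hv.2
    have e1 := (hu u₁ h1).2; have e2 := (hu u₂ h2).2
    linarith

lemma copula_v_bounds {C : ℝ → ℝ → ℝ} (hC : IsCopula C) {u v₁ v₂ : ℝ}
    (hu' : u ∈ Icc (0:ℝ) 1) (h1 : v₁ ∈ Icc (0:ℝ) 1) (h2 : v₂ ∈ Icc (0:ℝ) 1) (h12 : v₁ ≤ v₂) :
    C u v₁ ≤ C u v₂ ∧ C u v₂ - C u v₁ ≤ v₂ - v₁ := by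
  obtain ⟨hr, hu, hvb, hrect⟩ := hC
  have h0 : (0:ℝ) ∈ Icc (0:ℝ) 1 := ⟨le_refl 0, zero_le_one⟩
  have h1' : (1:ℝ) ∈ Icc (0:ℝ) 1 := ⟨zero_le_one, le_refl 1⟩
  constructor
  · have := hrect 0 h0 u hu' v₁ h1 v₂ h2 hu'.1 h12
    have e1 := (hvb v₁ h1).1; have e2 := (hvb v₂ h2).1
    linarith
  · have := hrect u hu' 1 h1' v₁ h1 v₂ h2 hu'.2 h12
    have e1 := (hvb v₁ h1).2; have e2 := (hvb v₂ h2).2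
    linarith

/-- clamp to [0,1] -/
def clmp (s : ℝ) : ℝ := max 0 (min s 1)

lemma clmp_mem (s : ℝ) : clmp s ∈ Icc (0:ℝ) 1 :=
  ⟨le_max_left _ _, max_le (by linarith [min_le_right s 1]) (min_le_right s 1)⟩

lemma clmp_of_mem {s : ℝ} (hs : s ∈ Icc (0:ℝ) 1) : clmp s = s := by
  simp [clmp, min_eq_left hs.2, max_eq_right hs.1]

lemma clmp_mono : Monotone clmp := fun a b hab =>
  max_le_max (le_refl 0) (min_le_min hab (le_refl 1))

lemma clmp_lip (a b : ℝ) : |clmp a - clmp b| ≤ |a - b| := by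
  have h1 : |clmp a - clmp b| ≤ |min a 1 - min b 1| := by
    rw [clmp, clmp, max_comm 0 (min a 1), max_comm 0 (min b 1)]
    exact abs_max_sub_max_le_abs _ _ _
  refine h1.trans ?_
  have := abs_min_sub_min_le_max a 1 b 1
  simpa using this


lemma key_ineq {C : ℝ → ℝ → ℝ} (hC : IsCopula C) {v : ℝ} (hv : v ∈ Icc (0:ℝ) 1)
    {μ : ℝ} (hμ : 0 < μ) :
    C v v ≤ v^2 + μ/2 * ((∫ t in (0:ℝ)..1, (d1 C t v)^2) - v^2) + v*(1-v)/(2*μ) := by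
  classical
  set f : ℝ → ℝ := fun s => C (clmp s) v with hfdef
  have hmono : Monotone f := fun a b hab =>
    (copula_u_bounds hC (clmp_mem a) (clmp_mem b) hv (clmp_mono hab)).1
  have hlip : LipschitzWith 1 f := by
    apply LipschitzWith.of_dist_le_mul
    intro a b
    rw [Real.dist_eq, Real.dist_eq, NNReal.coe_one, one_mul]
    rcases le_total (clmp a) (clmp b) with h | h
    · have h2 := copula_u_bounds hC (clmp_mem a) (clmp_mem b) hv h
      have h3 := clmp_lip a b
      rw [abs_sub_comm (clmp a) (clmp b)] at h3
      rw [abs_sub_comm]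
      rw [abs_of_nonneg (by linarith [h2.1] : (0:ℝ) ≤ f b - f a)]
      calc f b - f a ≤ clmp b - clmp a := h2.2
        _ ≤ |clmp b - clmp a| := le_abs_self _
        _ ≤ |a - b| := by rw [abs_sub_comm]; exact clmp_lip a b
    · have h2 := copula_u_bounds hC (clmp_mem b) (clmp_mem a) hv h
      rw [abs_of_nonneg (by linarith [h2.1] : (0:ℝ) ≤ f a - f b)]
      calc f a - f b ≤ clmp a - clmp b := h2.2
        _ ≤ |clmp a - clmp b| := le_abs_self _
        _ ≤ |a - b| := clmp_lip a b
  set h : ℝ → ℝ := fun t => deriv f t with hhdef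
  have hmeas : Measurable h := measurable_deriv f
  have habs : ∀ t, |h t| ≤ 1 := fun t => deriv_abs_le hlip t
  have h0mem : (0:ℝ) ∈ Icc (0:ℝ) 1 := ⟨le_refl 0, zero_le_one⟩
  have h1mem : (1:ℝ) ∈ Icc (0:ℝ) 1 := ⟨zero_le_one, le_refl 1⟩
  have hf0 : f 0 = 0 := by
    rw [hfdef]; simp only; rw [clmp_of_mem h0mem]; exact ((hC.2.2.1) v hv).1
  have hf1 : f 1 = v := by
    rw [hfdef]; simp only; rw [clmp_of_mem h1mem]; exact ((hC.2.2.1) v hv).2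
  have hfv : f v = C v v := by rw [hfdef]; simp only; rw [clmp_of_mem hv]
  have I01 : ∫ t in (0:ℝ)..1, h t = v := by rw [ftc_lip hmono hlip, hf1, hf0]; ring
  have I0v : ∫ t in (0:ℝ)..v, h t = C v v := by rw [ftc_lip hmono hlip, hfv, hf0]; ring
  -- the indicator
  set χ : ℝ → ℝ := fun t => if t ≤ v then (1:ℝ) else 0 with hχdef
  have hχmeas : Measurable χ := by
    apply Measurable.ite measurableSet_Iic measurable_const measurable_const
  have hχabs : ∀ t, |χ t| ≤ 1 := by
    intro t; rw [hχdef]; dsimp only; split_ifs <;> simp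
  -- d1 agrees with h on (0,1)
  have hd1 : ∀ t ∈ Ioo (0:ℝ) 1, d1 C t v = h t := by
    intro t ht
    have hev : (fun s => C s v) =ᶠ[nhds t] f := by
      filter_upwards [Ioo_mem_nhds ht.1 ht.2] with s hs
      rw [hfdef]; simp only; rw [clmp_of_mem ⟨hs.1.le, hs.2.le⟩]
    exact hev.deriv_eq
  have hI2 : ∫ t in (0:ℝ)..1, (d1 C t v)^2 = ∫ t in (0:ℝ)..1, (h t)^2 := by
    apply intervalIntegral.integral_congr_ae
    have hne : ∀ᵐ t : ℝ, t ∉ ({1} : Set ℝ) :=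
      (MeasureTheory.measure_eq_zero_iff_ae_notMem (μ := volume)).1 Real.volume_singleton
    filter_upwards [hne] with t ht htmem
    rw [Set.uIoc_of_le zero_le_one] at htmem
    have : t ∈ Ioo (0:ℝ) 1 := ⟨htmem.1, lt_of_le_of_ne htmem.2 (by simpa using ht)⟩
    rw [hd1 t this]
  -- integrability helpers
  have hbd_mul : ∀ t, |h t * χ t| ≤ 1 := by
    intro t; rw [abs_mul]
    exact mul_le_one₀ (habs t) (abs_nonneg _) (hχabs t)
  have ih : ∀ a b : ℝ, IntervalIntegrable h volume a b := fun a b => intInt_bdd hmeas habs a b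
  have ihχ : ∀ a b : ℝ, IntervalIntegrable (fun t => h t * χ t) volume a b :=
    fun a b => intInt_bdd (hmeas.mul hχmeas) hbd_mul a b
  have iχ : ∀ a b : ℝ, IntervalIntegrable χ volume a b := fun a b => intInt_bdd hχmeas hχabs a b
  have ih2 : IntervalIntegrable (fun t => (h t)^2) volume 0 1 := by
    refine intInt_bdd (hmeas.pow_const 2) (M := 1) (fun t => ?_) 0 1
    rw [abs_pow]
    nlinarith [habs t, abs_nonneg (h t)]
  -- ∫ h χ = C v v
  have hIchi : ∫ t in (0:ℝ)..1, h t * χ t = C v v := by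
    have hsplit := intervalIntegral.integral_add_adjacent_intervals (ihχ 0 v) (ihχ v 1)
    have e1 : ∫ t in (0:ℝ)..v, h t * χ t = ∫ t in (0:ℝ)..v, h t := by
      apply intervalIntegral.integral_congr
      intro t ht
      rw [uIcc_of_le hv.1] at ht
      simp [hχdef, ht.2]
    have e2 : ∫ t in v..(1:ℝ), h t * χ t = 0 := by
      have : ∫ t in v..(1:ℝ), h t * χ t = ∫ t in v..(1:ℝ), (0:ℝ) := by
        apply intervalIntegral.integral_congr_ae
        refine Filter.Eventually.of_forall fun t ht => ?_
        rw [Set.uIoc_of_le hv.2] at ht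
        simp [hχdef, not_le.2 ht.1]
      rw [this, intervalIntegral.integral_zero]
    rw [e1, e2, I0v] at hsplit
    linarith
  -- ∫ χ = v
  have hIχ : ∫ t in (0:ℝ)..1, χ t = v := by
    have hsplit := intervalIntegral.integral_add_adjacent_intervals (iχ 0 v) (iχ v 1)
    have e1 : ∫ t in (0:ℝ)..v, χ t = v := by
      have : ∫ t in (0:ℝ)..v, χ t = ∫ t in (0:ℝ)..v, (1:ℝ) := by
        apply intervalIntegral.integral_congr
        intro t ht
        rw [uIcc_of_le hv.1] at ht
        simp [hχdef, ht.2]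
      rw [this]; simp
    have e2 : ∫ t in v..(1:ℝ), χ t = 0 := by
      have : ∫ t in v..(1:ℝ), χ t = ∫ t in v..(1:ℝ), (0:ℝ) := by
        apply intervalIntegral.integral_congr_ae
        refine Filter.Eventually.of_forall fun t ht => ?_
        rw [Set.uIoc_of_le hv.2] at ht
        simp [hχdef, not_le.2 ht.1]
      rw [this, intervalIntegral.integral_zero]
    rw [e1, e2] at hsplit
    linarith
  -- pointwise nonnegativity
  have hptwise : ∀ t, 0 ≤ μ/2*(h t)^2 + (v-μ*v)*(h t) + ((1-2*v)/(2*μ) + v)*(χ t)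
      - (h t)*(χ t) + (μ/2*v^2 + v^2/(2*μ) - v^2) := by
    intro t
    have hμ' : (2:ℝ)*μ ≠ 0 := by positivity
    rcases le_or_gt t v with htv | htv
    · have hb : χ t = 1 := by simp [hχdef, htv]
      rw [hb]
      have hid : μ/2*(h t)^2 + (v-μ*v)*(h t) + ((1-2*v)/(2*μ) + v)*1
          - (h t)*1 + (μ/2*v^2 + v^2/(2*μ) - v^2)
          = (μ*(h t - v) - (1 - v))^2/(2*μ) := by field_simp; ring
      rw [hid]; positivity
    · have hb : χ t = 0 := by simp [hχdef, not_le.2 htv]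
      rw [hb]
      have hid : μ/2*(h t)^2 + (v-μ*v)*(h t) + ((1-2*v)/(2*μ) + v)*0
          - (h t)*0 + (μ/2*v^2 + v^2/(2*μ) - v^2)
          = (μ*(h t - v) - (0 - v))^2/(2*μ) := by field_simp; ring
      rw [hid]; positivity
  have hTnn : 0 ≤ ∫ t in (0:ℝ)..1, (μ/2*(h t)^2 + (v-μ*v)*(h t) + ((1-2*v)/(2*μ) + v)*(χ t)
      - (h t)*(χ t) + (μ/2*v^2 + v^2/(2*μ) - v^2)) :=
    intervalIntegral.integral_nonneg zero_le_one (fun t _ => hptwise t)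
  -- expand the integral
  have i1 : IntervalIntegrable (fun t => μ/2*(h t)^2) volume 0 1 := ih2.const_mul _
  have i2 : IntervalIntegrable (fun t => (v-μ*v)*(h t)) volume 0 1 := (ih 0 1).const_mul _
  have i3 : IntervalIntegrable (fun t => ((1-2*v)/(2*μ) + v)*(χ t)) volume 0 1 :=
    (iχ 0 1).const_mul _
  have hexp : (∫ t in (0:ℝ)..1, (μ/2*(h t)^2 + (v-μ*v)*(h t) + ((1-2*v)/(2*μ) + v)*(χ t)
      - (h t)*(χ t) + (μ/2*v^2 + v^2/(2*μ) - v^2)))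
      = μ/2*(∫ t in (0:ℝ)..1, (h t)^2) + (v-μ*v)*v + ((1-2*v)/(2*μ) + v)*v - C v v
        + (μ/2*v^2 + v^2/(2*μ) - v^2) := by
    rw [intervalIntegral.integral_add (((i1.add i2).add i3).sub (ihχ 0 1)) intervalIntegrable_const,
        intervalIntegral.integral_sub ((i1.add i2).add i3) (ihχ 0 1),
        intervalIntegral.integral_add (i1.add i2) i3,
        intervalIntegral.integral_add i1 i2,
        intervalIntegral.integral_const_mul, intervalIntegral.integral_const_mul,
        intervalIntegral.integral_const_mul, intervalIntegral.integral_const,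
        I01, hIχ, hIchi]
    simp
  rw [hexp] at hTnn
  rw [hI2]
  have hkey : μ/2*(∫ t in (0:ℝ)..1, (h t)^2) + (v-μ*v)*v + ((1-2*v)/(2*μ) + v)*v - C v v
        + (μ/2*v^2 + v^2/(2*μ) - v^2)
      = (v^2 + μ/2 * ((∫ t in (0:ℝ)..1, (h t)^2) - v^2) + v*(1-v)/(2*μ)) - C v v := by
    field_simp; ring
  linarith [hkey ▸ hTnn]




lemma psi_le_sqrt_xi {C : ℝ → ℝ → ℝ} (hC : IsCopula C) {x : ℝ} (hx : x ∈ Icc (0:ℝ) 1)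
    (hxi : xi C = x) : psi C ≤ Real.sqrt x := by
  classical
  set G : ℝ → ℝ := fun v => ∫ t in (0:ℝ)..1, (d1 C t v)^2 with hGdef
  have hGint : IntervalIntegrable G volume 0 1 := by
    by_contra hnot
    have h0 : (∫ v in (0:ℝ)..1, G v) = 0 := intervalIntegral.integral_undef hnot
    have : xi C = -2 := by rw [xi, hGdef] at *; rw [h0]; ring
    rw [hxi] at this; linarith [hx.1]
  have hGval : (∫ v in (0:ℝ)..1, G v) = (x+2)/6 := by
    have : 6 * (∫ v in (0:ℝ)..1, G v) - 2 = x := hxi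
    linarith
  have hdiagmono : MonotoneOn (fun v => C v v) (uIcc (0:ℝ) 1) := by
    rw [uIcc_of_le zero_le_one]
    intro a ha b hb hab
    calc C a a ≤ C b a := (copula_u_bounds hC ha hb ha hab).1
      _ ≤ C b b := (copula_v_bounds hC hb ha hb hab).1
  have hdiagint : IntervalIntegrable (fun v => C v v) volume 0 1 :=
    hdiagmono.intervalIntegrable
  have key : ∀ μ : ℝ, 0 < μ → psi C ≤ (μ*x + 1/μ)/2 := by
    intro μ hμ
    have hRint : IntervalIntegrable
        (fun v => v^2 + μ/2 * (G v - v^2) + v*(1-v)/(2*μ)) volume 0 1 := by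
      apply IntervalIntegrable.add
      · apply IntervalIntegrable.add
        · exact (continuous_pow 2).intervalIntegrable 0 1
        · exact ((hGint.sub ((continuous_pow 2).intervalIntegrable 0 1)).const_mul _)
      · exact (Continuous.intervalIntegrable (by continuity) 0 1)
    have hmono := intervalIntegral.integral_mono_on zero_le_one hdiagint hRint
      (fun v hv => key_ineq hC hv hμ)
    have hpolyint : IntervalIntegrable (fun v : ℝ => v^2) volume 0 1 :=
      (continuous_pow 2).intervalIntegrable 0 1
    have hRval : (∫ v in (0:ℝ)..1, (v^2 + μ/2 * (G v - v^2) + v*(1-v)/(2*μ)))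
        = 1/3 + μ/2 * ((x+2)/6 - 1/3) + (1/6)/(2*μ) := by
      rw [intervalIntegral.integral_add ((hpolyint.add ((hGint.sub hpolyint).const_mul _)))
            (Continuous.intervalIntegrable (by continuity) 0 1),
          intervalIntegral.integral_add hpolyint ((hGint.sub hpolyint).const_mul _),
          intervalIntegral.integral_const_mul,
          intervalIntegral.integral_sub hGint hpolyint, hGval]
      have e1 : (∫ v in (0:ℝ)..1, v^2) = 1/3 := by
        rw [integral_pow]; norm_num
      have e2 : (∫ v in (0:ℝ)..1, v*(1-v)/(2*μ)) = (1/6)/(2*μ) := by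
        have : (fun v : ℝ => v*(1-v)/(2*μ)) = fun v : ℝ => (1/(2*μ)) * (v - v^2) := by
          funext v; field_simp
        rw [this, intervalIntegral.integral_const_mul,
            intervalIntegral.integral_sub (Continuous.intervalIntegrable (by continuity) 0 1)
              hpolyint, integral_id, integral_pow]
        field_simp
        ring
      rw [e1, e2]
    rw [hRval] at hmono
    rw [psi]
    have : (∫ v in (0:ℝ)..1, C v v) ≤ 1/3 + μ/2 * ((x+2)/6 - 1/3) + (1/6)/(2*μ) := hmono
    have harith : 6 * (1/3 + μ/2 * ((x+2)/6 - 1/3) + (1/6)/(2*μ)) - 2 = (μ*x + 1/μ)/2 := by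
      field_simp; ring
    linarith
  rcases eq_or_lt_of_le hx.1 with h0 | hpos
  · have hx0 : x = 0 := h0.symm
    rw [hx0, Real.sqrt_zero]
    by_contra hcon
    push_neg at hcon
    have hkey := key (1/(psi C)) (by positivity)
    rw [hx0] at hkey
    have : (1 / psi C * 0 + 1 / (1 / psi C)) / 2 = psi C / 2 := by
      field_simp
      ring
    rw [this] at hkey
    linarith
  · have hs : 0 < Real.sqrt x := Real.sqrt_pos.2 hpos
    have hkey := key (1/Real.sqrt x) (by positivity)
    have hsq : Real.sqrt x * Real.sqrt x = x := Real.mul_self_sqrt hx.1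
    have hmul : 1/Real.sqrt x * x = Real.sqrt x := by
      rw [one_div, inv_mul_eq_div, eq_comm, eq_div_iff hs.ne']
      linarith [hsq]
    have : (1/Real.sqrt x * x + 1/(1/Real.sqrt x))/2 = Real.sqrt x := by
      rw [one_div_one_div, hmul]
      ring
    rw [this] at hkey
    exact hkey



lemma frechet_isCopula {α : ℝ} (hα : α ∈ Icc (0:ℝ) 1) : IsCopula (frechet α) := by
  obtain ⟨ha0, ha1⟩ := hα
  refine ⟨?_, ?_, ?_, ?_⟩
  · rintro u ⟨hu0, hu1⟩ v ⟨hv0, hv1⟩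
    have hm0 : 0 ≤ min u v := le_min hu0 hv0
    have hm1 : min u v ≤ 1 := (min_le_left u v).trans hu1
    simp only [frechet]
    constructor
    · have := mul_nonneg (mul_nonneg (by linarith : (0:ℝ) ≤ 1 - α) hu0) hv0
      nlinarith [mul_nonneg ha0 hm0]
    · nlinarith [mul_nonneg hu0 hv0, mul_nonneg (by linarith : (0:ℝ) ≤ 1-α)
        (by nlinarith : (0:ℝ) ≤ 1 - u*v), mul_nonneg ha0 (by linarith : (0:ℝ) ≤ 1 - min u v)]
  · rintro u ⟨hu0, hu1⟩
    constructor
    · simp [frechet, min_eq_right hu0]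
    · simp [frechet, min_eq_left hu1]; ring
  · rintro v ⟨hv0, hv1⟩
    constructor
    · simp [frechet, min_eq_left hv0]
    · simp [frechet, min_eq_right hv1]; ring
  · rintro u₁ ⟨hu₁0, hu₁1⟩ u₂ ⟨hu₂0, hu₂1⟩ v₁ ⟨hv₁0, hv₁1⟩ v₂ ⟨hv₂0, hv₂1⟩ h12 h12'
    have hmin : 0 ≤ min u₂ v₂ - min u₁ v₂ - min u₂ v₁ + min u₁ v₁ := by
      simp only [min_def]; split_ifs <;> linarith
    have hprod : 0 ≤ (1-α) * ((u₂ - u₁) * (v₂ - v₁)) :=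
      mul_nonneg (by linarith) (mul_nonneg (by linarith) (by linarith))
    have hαmin := mul_nonneg ha0 hmin
    simp only [frechet]
    nlinarith [hprod, hαmin]

lemma frechet_psi {α : ℝ} : (6 : ℝ) * (∫ v in (0:ℝ)..1, frechet α v v) - 2 = α := by
  have hfun : (fun v : ℝ => frechet α v v) = fun v : ℝ => (1-α)*v^2 + α*v := by
    funext v; simp [frechet, min_self]; ring
  rw [hfun, intervalIntegral.integral_add
      ((Continuous.intervalIntegrable (by continuity) 0 1))
      ((Continuous.intervalIntegrable (by continuity) 0 1))]
  have e1 : (∫ v in (0:ℝ)..1, (1-α)*v^2) = (1-α)/3 := by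
    rw [intervalIntegral.integral_const_mul, integral_pow]; norm_num; ring
  have e2 : (∫ v in (0:ℝ)..1, α*v) = α/2 := by
    rw [intervalIntegral.integral_const_mul, integral_id]; norm_num; ring
  rw [e1, e2]; ring

lemma frechet_d1_lt {α v t : ℝ} (ht : t < v) :
    d1 (frechet α) t v = (1-α)*v + α := by
  have hev : (fun s => frechet α s v) =ᶠ[nhds t] (fun s => ((1-α)*v + α) * s) := by
    filter_upwards [Iio_mem_nhds ht] with s hs
    rw [frechet, min_eq_left (le_of_lt hs)]; ring
  rw [d1, hev.deriv_eq]
  simpa using ((hasDerivAt_id t).const_mul ((1-α)*v + α)).deriv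

lemma frechet_d1_gt {α v t : ℝ} (ht : v < t) :
    d1 (frechet α) t v = (1-α)*v := by
  have hev : (fun s => frechet α s v) =ᶠ[nhds t] (fun s => ((1-α)*v) * s + α * v) := by
    filter_upwards [Ioi_mem_nhds ht] with s hs
    rw [frechet, min_eq_right (le_of_lt hs)]; ring
  rw [d1, hev.deriv_eq]
  have : HasDerivAt (fun s : ℝ => ((1-α)*v) * s + α * v) ((1-α)*v) t := by
    simpa using (((hasDerivAt_id t).const_mul ((1-α)*v)).add_const (α * v))
  exact this.deriv

lemma frechet_xi {α : ℝ} :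
    (6 : ℝ) * (∫ v in (0:ℝ)..1, ∫ t in (0:ℝ)..1, (d1 (frechet α) t v) ^ 2) - 2 = α ^ 2 := by
  have hinner : ∀ v ∈ uIcc (0:ℝ) 1,
      (∫ t in (0:ℝ)..1, (d1 (frechet α) t v)^2) = (1-α^2)*v^2 + α^2*v := by
    rw [uIcc_of_le zero_le_one]
    intro v hv
    have hnev : ∀ᵐ t : ℝ, t ∉ ({v} : Set ℝ) :=
      (MeasureTheory.measure_eq_zero_iff_ae_notMem (μ := volume)).1 Real.volume_singleton
    set w : ℝ → ℝ := fun t => if t < v then (1-α)*v + α else (1-α)*v with hwdef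
    have h1 : (∫ t in (0:ℝ)..1, (d1 (frechet α) t v)^2) = ∫ t in (0:ℝ)..1, (w t)^2 := by
      apply intervalIntegral.integral_congr_ae
      filter_upwards [hnev] with t ht _
      rcases lt_trichotomy t v with h | h | h
      · simp only [hwdef]; rw [frechet_d1_lt h, if_pos h]
      · exact absurd h (by simpa using ht)
      · simp only [hwdef]; rw [frechet_d1_gt h, if_neg (not_lt.2 h.le)]
    have h2 : (∫ t in (0:ℝ)..v, (w t)^2) = v * ((1-α)*v + α)^2 := by
      have : (∫ t in (0:ℝ)..v, (w t)^2) = ∫ t in (0:ℝ)..v, ((1-α)*v + α)^2 := by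
        apply intervalIntegral.integral_congr_ae
        filter_upwards [hnev] with t ht htm
        rw [Set.uIoc_of_le hv.1] at htm
        have : t < v := lt_of_le_of_ne htm.2 (by simpa using ht)
        rw [hwdef]; simp [this]
      rw [this, intervalIntegral.integral_const, smul_eq_mul]; ring
    have h3 : (∫ t in v..(1:ℝ), (w t)^2) = (1-v) * ((1-α)*v)^2 := by
      have : (∫ t in v..(1:ℝ), (w t)^2) = ∫ t in v..(1:ℝ), ((1-α)*v)^2 := by
        apply intervalIntegral.integral_congr
        intro t htm
        rw [uIcc_of_le hv.2] at htm
        simp only [hwdef]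
        rw [if_neg (not_lt.2 htm.1)]
      rw [this, intervalIntegral.integral_const, smul_eq_mul]
    have hwint : ∀ a b : ℝ, IntervalIntegrable (fun t => (w t)^2) volume a b := by
      intro a b
      refine intInt_bdd ?_ (M := ((1-α)*v + α)^2 + ((1-α)*v)^2) (fun t => ?_) a b
      · exact ((measurable_const.ite measurableSet_Iio measurable_const).pow_const 2)
      · rw [hwdef]; dsimp only; split_ifs <;>
        · rw [abs_of_nonneg (sq_nonneg _)]; nlinarith [sq_nonneg ((1-α)*v + α), sq_nonneg ((1-α)*v)]
    have hsplit := intervalIntegral.integral_add_adjacent_intervals (hwint 0 v) (hwint v 1)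
    rw [h1, ← hsplit, h2, h3]; ring
  rw [intervalIntegral.integral_congr hinner,
      intervalIntegral.integral_add (Continuous.intervalIntegrable (by continuity) 0 1)
        (Continuous.intervalIntegrable (by continuity) 0 1),
      intervalIntegral.integral_const_mul, intervalIntegral.integral_const_mul,
      integral_pow, integral_id]
  norm_num; ring


/-- Every Fréchet copula `C^Fr_α` (with `α ∈ [0,1]`) is a bivariate copula
with `ξ = α²` and `ψ = α`; consequently, for every `x ∈ [0,1]`, the maximum of `ψ(C)` over
all copulas `C` with `ξ(C) = x` equals `√x`. -/
theorem frechet_attains_upper_bound :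
    (∀ α ∈ Icc (0:ℝ) 1,
      IsCopula (frechet α) ∧ xi (frechet α) = α ^ 2 ∧ psi (frechet α) = α) ∧
    (∀ x ∈ Icc (0:ℝ) 1,
      IsGreatest {y : ℝ | ∃ C : ℝ → ℝ → ℝ, IsCopula C ∧ xi C = x ∧ psi C = y}
        (Real.sqrt x)) := by
  have part1 : ∀ α ∈ Icc (0:ℝ) 1,
      IsCopula (frechet α) ∧ xi (frechet α) = α ^ 2 ∧ psi (frechet α) = α := by
    intro α hα
    exact ⟨frechet_isCopula hα, frechet_xi, frechet_psi⟩
  refine ⟨part1, ?_⟩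
  intro x hx
  constructor
  · have hs : Real.sqrt x ∈ Icc (0:ℝ) 1 := ⟨Real.sqrt_nonneg x, Real.sqrt_le_one.2 hx.2⟩
    obtain ⟨hcop, hxiv, hpsiv⟩ := part1 _ hs
    exact ⟨frechet (Real.sqrt x), hcop, by rw [hxiv, Real.sq_sqrt hx.1], hpsiv⟩
  · rintro y ⟨C, hC, hxiC, hpsiC⟩
    rw [← hpsiC]
    exact psi_le_sqrt_xi hC hx hxiC
end
end

section
/- Let x ∈ (0,1] and let C be a bivariate copula with ξ(C) = x and ψ(C) = √x. Then C is the Fréchet copula with parameter √x, i.e. C(u,v) = (1−√x)uv + √x·min(u,v) for all (u,v) ∈ [0,1]²; equivalently, ∂₁C(t,v) = (1−√x)v + √x·𝟙_{t≤v} for almost every (t,v) ∈ [0,1]². -/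
open MeasureTheory Set

noncomputable section

lemma slope_seq_tendsto {φ : ℝ → ℝ} {c L : ℝ} (h : HasDerivAt φ L c) :
    Filter.Tendsto (fun n : ℕ => ((n : ℝ) + 1) * (φ (c + 1 / ((n : ℝ) + 1)) - φ c))
      Filter.atTop (nhds L) := by
  have hs := hasDerivAt_iff_tendsto_slope.mp h
  have hpos : ∀ n : ℕ, (0:ℝ) < 1 / ((n : ℝ) + 1) := by
    intro n; positivity
  have hseq : Filter.Tendsto (fun n : ℕ => c + 1 / ((n : ℝ) + 1)) Filter.atTop
      (nhdsWithin c {c}ᶜ) := by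
    rw [tendsto_nhdsWithin_iff]
    constructor
    · have h0 : Filter.Tendsto (fun n : ℕ => 1 / ((n : ℝ) + 1)) Filter.atTop (nhds 0) :=
        tendsto_one_div_add_atTop_nhds_zero_nat
      have := h0.const_add c
      simpa using this
    · filter_upwards with n
      simp only [mem_compl_iff, mem_singleton_iff]
      intro hc
      nlinarith [hpos n]
  have := hs.comp hseq
  apply this.congr
  intro n
  simp only [Function.comp_apply, slope_def_field]
  field_simp
  ring


lemma deriv_le_of_lipschitz {g : ℝ → ℝ} (hg : LipschitzWith 1 g) (t : ℝ) :
    |deriv g t| ≤ 1 := by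
  by_cases hd : DifferentiableAt ℝ g t
  · have h := slope_seq_tendsto hd.hasDerivAt
    have hb : ∀ n : ℕ, |((n : ℝ) + 1) * (g (t + 1 / ((n : ℝ) + 1)) - g t)| ≤ 1 := by
      intro n
      have hd := hg.dist_le_mul (t + 1 / ((n : ℝ) + 1)) t
      rw [Real.dist_eq, Real.dist_eq] at hd
      have hn : (0:ℝ) < (n : ℝ) + 1 := by positivity
      rw [abs_mul, abs_of_pos hn]
      calc ((n : ℝ) + 1) * |g (t + 1 / ((n : ℝ) + 1)) - g t|
          ≤ ((n : ℝ) + 1) * (1 * |t + 1 / ((n : ℝ) + 1) - t|) := by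
            exact mul_le_mul_of_nonneg_left hd hn.le
        _ = 1 := by
            rw [one_mul]
            have : |t + 1 / ((n : ℝ) + 1) - t| = 1 / ((n : ℝ) + 1) := by
              rw [add_sub_cancel_left, abs_of_pos]; positivity
            rw [this]; field_simp
    have : |deriv g t| ≤ 1 := by
      have habs := h.abs
      exact le_of_tendsto habs (Filter.Eventually.of_forall hb)
    exact this
  · rw [deriv_zero_of_not_differentiableAt hd]; simp

lemma lipschitz_ftc {g : ℝ → ℝ} (hg : LipschitzWith 1 g) {a b : ℝ} (hab : a ≤ b) :
    ∫ t in a..b, deriv g t = g b - g a := by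
  have hgc : Continuous g := hg.continuous
  have hgm : Measurable g := hgc.measurable
  -- the sequence of difference quotients
  set F : ℕ → ℝ → ℝ := fun n t => ((n : ℝ) + 1) * (g (t + 1 / ((n : ℝ) + 1)) - g t) with hF
  -- a.e. convergence to deriv g on [a,b]
  have hae : ∀ᵐ t ∂(volume.restrict (Ioc a b)),
      Filter.Tendsto (fun n => F n t) Filter.atTop (nhds (deriv g t)) := by
    have h1 : ∀ᵐ t : ℝ, DifferentiableAt ℝ g t := hg.ae_differentiableAt
    have h2 := ae_restrict_of_ae (μ := volume) (s := Ioc a b) h1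
    filter_upwards [h2] with t ht
    exact slope_seq_tendsto ht.hasDerivAt
  -- dominated convergence
  have hmeasF : ∀ n, AEStronglyMeasurable (F n) (volume.restrict (Ioc a b)) := by
    intro n
    exact (((hgm.comp (measurable_id.add_const _)).sub hgm).const_mul _).aestronglyMeasurable
  have hboundF : ∀ n, ∀ᵐ t ∂(volume.restrict (Ioc a b)), ‖F n t‖ ≤ 1 := by
    intro n
    filter_upwards with t
    have hd := hg.dist_le_mul (t + 1 / ((n : ℝ) + 1)) t
    rw [Real.dist_eq, Real.dist_eq] at hd
    have hn : (0:ℝ) < (n : ℝ) + 1 := by positivity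
    rw [Real.norm_eq_abs, hF]
    simp only [abs_mul, abs_of_pos hn]
    calc ((n : ℝ) + 1) * |g (t + 1 / ((n : ℝ) + 1)) - g t|
        ≤ ((n : ℝ) + 1) * (1 * |t + 1 / ((n : ℝ) + 1) - t|) :=
          mul_le_mul_of_nonneg_left hd hn.le
      _ = 1 := by
          rw [one_mul, add_sub_cancel_left, abs_of_pos (by positivity : (0:ℝ) < 1 / ((n:ℝ)+1))]
          field_simp
  have hint1 : Integrable (fun _ : ℝ => (1:ℝ)) (volume.restrict (Ioc a b)) :=
    integrable_const 1
  have hDCT := MeasureTheory.tendsto_integral_of_dominated_convergence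
      (μ := volume.restrict (Ioc a b)) (F := F) (f := deriv g) (bound := fun _ => 1)
      hmeasF hint1 hboundF hae
  -- compute the integrals of F n
  have hintg : ∀ c d : ℝ, IntervalIntegrable g volume c d := fun c d =>
    hgc.intervalIntegrable c d
  have hFval : ∀ n : ℕ, ∫ t in Ioc a b, F n t =
      ((n : ℝ) + 1) * ((∫ t in b..(b + 1/((n:ℝ)+1)), g t) - ∫ t in a..(a + 1/((n:ℝ)+1)), g t) := by
    intro n
    have h1 : ∫ t in Ioc a b, F n t = ∫ t in a..b, F n t := by
      rw [intervalIntegral.integral_of_le hab]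
    rw [h1, hF]
    simp only []
    rw [intervalIntegral.integral_const_mul]
    have h2 : ∫ t in a..b, (g (t + 1 / ((n : ℝ) + 1)) - g t) =
        (∫ t in a..b, g (t + 1 / ((n:ℝ)+1))) - ∫ t in a..b, g t := by
      apply intervalIntegral.integral_sub
      · exact (hgc.comp (continuous_id.add continuous_const)).intervalIntegrable a b
      · exact hintg a b
    rw [h2]
    have h3 : ∫ t in a..b, g (t + 1 / ((n:ℝ)+1)) =
        ∫ t in (a + 1/((n:ℝ)+1))..(b + 1/((n:ℝ)+1)), g t :=
      (intervalIntegral.integral_comp_add_right (a := a) (b := b) g (1/((n:ℝ)+1)))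
    rw [h3]
    have h4 : (∫ t in (a + 1/((n:ℝ)+1))..(b + 1/((n:ℝ)+1)), g t) - ∫ t in a..b, g t =
        (∫ t in b..(b + 1/((n:ℝ)+1)), g t) - ∫ t in a..(a + 1/((n:ℝ)+1)), g t := by
      have e1 : (∫ t in a..(a + 1/((n:ℝ)+1)), g t) + (∫ t in (a + 1/((n:ℝ)+1))..(b + 1/((n:ℝ)+1)), g t)
          = ∫ t in a..(b + 1/((n:ℝ)+1)), g t :=
        intervalIntegral.integral_add_adjacent_intervals (hintg _ _) (hintg _ _)
      have e2 : (∫ t in a..b, g t) + (∫ t in b..(b + 1/((n:ℝ)+1)), g t)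
          = ∫ t in a..(b + 1/((n:ℝ)+1)), g t :=
        intervalIntegral.integral_add_adjacent_intervals (hintg _ _) (hintg _ _)
      linarith
    rw [h4]
  -- the limit of the right-hand side
  have hlim : ∀ c : ℝ, Filter.Tendsto
      (fun n : ℕ => ((n:ℝ)+1) * ∫ t in c..(c + 1/((n:ℝ)+1)), g t) Filter.atTop (nhds (g c)) := by
    intro c
    have hD : HasDerivAt (fun y => ∫ t in c..y, g t) (g c) c := by
      apply intervalIntegral.integral_hasDerivAt_right (hintg c c)
      · exact hgc.aestronglyMeasurable.stronglyMeasurableAtFilter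
      · exact hgc.continuousAt
    have := slope_seq_tendsto hD
    simpa using this
  have hRHS : Filter.Tendsto (fun n => ∫ t in Ioc a b, F n t) Filter.atTop
      (nhds (g b - g a)) := by
    have := (hlim b).sub (hlim a)
    apply Filter.Tendsto.congr _ this
    intro n
    rw [hFval n]; ring
  have := tendsto_nhds_unique hDCT hRHS
  rw [intervalIntegral.integral_of_le hab]
  exact this


def cl01 (s : ℝ) : ℝ := max 0 (min 1 s)

lemma cl01_mem (s : ℝ) : cl01 s ∈ Icc (0:ℝ) 1 := by
  constructor
  · exact le_max_left _ _
  · exact max_le zero_le_one (min_le_left _ _)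

lemma cl01_eq {s : ℝ} (h : s ∈ Icc (0:ℝ) 1) : cl01 s = s := by
  unfold cl01
  rw [min_eq_right h.2, max_eq_right h.1]

lemma cl01_lip : LipschitzWith 1 cl01 :=
  (LipschitzWith.id.const_min 1).const_max 0

lemma cl01_abs (s t : ℝ) : |cl01 s - cl01 t| ≤ |s - t| := by
  have := cl01_lip.dist_le_mul s t
  rw [Real.dist_eq, Real.dist_eq] at this
  simpa using this

lemma cl01_mono : Monotone cl01 := by
  intro a b hab
  exact max_le_max le_rfl (min_le_min le_rfl hab)

variable {C : ℝ → ℝ → ℝ}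

lemma cop_bounds1 (hC : IsCopula C) {v u₁ u₂ : ℝ} (hv : v ∈ Icc (0:ℝ) 1)
    (h1 : u₁ ∈ Icc (0:ℝ) 1) (h2 : u₂ ∈ Icc (0:ℝ) 1) (h12 : u₁ ≤ u₂) :
    0 ≤ C u₂ v - C u₁ v ∧ C u₂ v - C u₁ v ≤ u₂ - u₁ := by
  obtain ⟨hr, hu, hv', hrect⟩ := hC
  have h0 : (0:ℝ) ∈ Icc (0:ℝ) 1 := by norm_num
  have h1' : (1:ℝ) ∈ Icc (0:ℝ) 1 := by norm_num
  constructor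
  · have := hrect u₁ h1 u₂ h2 0 h0 v hv h12 hv.1
    have e1 := (hu u₁ h1).1
    have e2 := (hu u₂ h2).1
    linarith
  · have := hrect u₁ h1 u₂ h2 v hv 1 h1' h12 hv.2
    have e1 := (hu u₁ h1).2
    have e2 := (hu u₂ h2).2
    linarith

lemma cop_bounds2 (hC : IsCopula C) {u v₁ v₂ : ℝ} (hu : u ∈ Icc (0:ℝ) 1)
    (h1 : v₁ ∈ Icc (0:ℝ) 1) (h2 : v₂ ∈ Icc (0:ℝ) 1) (h12 : v₁ ≤ v₂) :
    0 ≤ C u v₂ - C u v₁ ∧ C u v₂ - C u v₁ ≤ v₂ - v₁ := by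
  obtain ⟨hr, hu', hv', hrect⟩ := hC
  have h0 : (0:ℝ) ∈ Icc (0:ℝ) 1 := by norm_num
  have h1' : (1:ℝ) ∈ Icc (0:ℝ) 1 := by norm_num
  constructor
  · have := hrect 0 h0 u hu v₁ h1 v₂ h2 hu.1 h12
    have e1 := (hv' v₁ h1).1
    have e2 := (hv' v₂ h2).1
    linarith
  · have := hrect u hu 1 h1' v₁ h1 v₂ h2 hu.2 h12
    have e1 := (hv' v₁ h1).2
    have e2 := (hv' v₂ h2).2
    linarith

lemma cop_abs1 (hC : IsCopula C) {v u₁ u₂ : ℝ} (hv : v ∈ Icc (0:ℝ) 1)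
    (h1 : u₁ ∈ Icc (0:ℝ) 1) (h2 : u₂ ∈ Icc (0:ℝ) 1) :
    |C u₂ v - C u₁ v| ≤ |u₂ - u₁| := by
  rcases le_total u₁ u₂ with h | h
  · obtain ⟨ha, hb⟩ := cop_bounds1 hC hv h1 h2 h
    rw [abs_of_nonneg ha, abs_of_nonneg (by linarith)]
    exact hb
  · obtain ⟨ha, hb⟩ := cop_bounds1 hC hv h2 h1 h
    rw [abs_sub_comm, abs_sub_comm u₂ u₁, abs_of_nonneg ha, abs_of_nonneg (by linarith)]
    exact hb

lemma cop_abs2 (hC : IsCopula C) {u v₁ v₂ : ℝ} (hu : u ∈ Icc (0:ℝ) 1)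
    (h1 : v₁ ∈ Icc (0:ℝ) 1) (h2 : v₂ ∈ Icc (0:ℝ) 1) :
    |C u v₂ - C u v₁| ≤ |v₂ - v₁| := by
  rcases le_total v₁ v₂ with h | h
  · obtain ⟨ha, hb⟩ := cop_bounds2 hC hu h1 h2 h
    rw [abs_of_nonneg ha, abs_of_nonneg (by linarith)]
    exact hb
  · obtain ⟨ha, hb⟩ := cop_bounds2 hC hu h2 h1 h
    rw [abs_sub_comm, abs_sub_comm v₂ v₁, abs_of_nonneg ha, abs_of_nonneg (by linarith)]
    exact hb

def gD (C : ℝ → ℝ → ℝ) (v t : ℝ) : ℝ := deriv (fun s => C (cl01 s) (cl01 v)) t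

lemma gD_lipfun (hC : IsCopula C) (v : ℝ) : LipschitzWith 1 (fun s => C (cl01 s) (cl01 v)) := by
  apply LipschitzWith.of_dist_le_mul
  intro s t
  rw [Real.dist_eq, Real.dist_eq]
  have h1 : |C (cl01 s) (cl01 v) - C (cl01 t) (cl01 v)| ≤ |cl01 s - cl01 t| :=
    cop_abs1 hC (cl01_mem v) (cl01_mem t) (cl01_mem s)
  have h2 := cl01_abs s t
  push_cast
  linarith
  

lemma gD_monofun (hC : IsCopula C) (v : ℝ) : Monotone (fun s => C (cl01 s) (cl01 v)) := by
  intro a b hab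
  have := (cop_bounds1 hC (cl01_mem v) (cl01_mem a) (cl01_mem b) (cl01_mono hab)).1
  dsimp only
  linarith

lemma gD_contfun (hC : IsCopula C) :
    Continuous (Function.uncurry (fun v s => C (cl01 s) (cl01 v))) := by
  apply LipschitzWith.continuous (K := 2)
  apply LipschitzWith.of_dist_le_mul
  intro p q
  rw [Real.dist_eq]
  calc |Function.uncurry (fun v s => C (cl01 s) (cl01 v)) p -
        Function.uncurry (fun v s => C (cl01 s) (cl01 v)) q|
      = |C (cl01 p.2) (cl01 p.1) - C (cl01 q.2) (cl01 q.1)| := rfl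
    _ ≤ |C (cl01 p.2) (cl01 p.1) - C (cl01 q.2) (cl01 p.1)| +
        |C (cl01 q.2) (cl01 p.1) - C (cl01 q.2) (cl01 q.1)| := abs_sub_le _ _ _
    _ ≤ |cl01 p.2 - cl01 q.2| + |cl01 p.1 - cl01 q.1| :=
        add_le_add (cop_abs1 hC (cl01_mem p.1) (cl01_mem q.2) (cl01_mem p.2))
          (cop_abs2 hC (cl01_mem q.2) (cl01_mem q.1) (cl01_mem p.1))
    _ ≤ |p.2 - q.2| + |p.1 - q.1| := add_le_add (cl01_abs _ _) (cl01_abs _ _)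
    _ ≤ dist p q + dist p q := by
        have e1 : |p.2 - q.2| ≤ dist p q := by
          rw [← Real.dist_eq, Prod.dist_eq]; exact le_max_right _ _
        have e2 : |p.1 - q.1| ≤ dist p q := by
          rw [← Real.dist_eq, Prod.dist_eq]; exact le_max_left _ _
        linarith
    _ = 2 * dist p q := by ring

lemma gD_meas (hC : IsCopula C) : Measurable (fun p : ℝ × ℝ => gD C p.1 p.2) :=
  measurable_deriv_with_param (gD_contfun hC)

lemma gD_eq_d1 {v t : ℝ} (hv : v ∈ Icc (0:ℝ) 1) (ht : t ∈ Ioo (0:ℝ) 1) :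
    d1 C t v = gD C v t := by
  unfold d1 gD
  apply Filter.EventuallyEq.deriv_eq
  filter_upwards [Ioo_mem_nhds ht.1 ht.2] with s hs
  rw [cl01_eq (Ioo_subset_Icc_self hs), cl01_eq hv]

lemma gD_nonneg (hC : IsCopula C) (v t : ℝ) : 0 ≤ gD C v t := by
  unfold gD
  by_cases hd : DifferentiableAt ℝ (fun s => C (cl01 s) (cl01 v)) t
  · have h := slope_seq_tendsto hd.hasDerivAt
    refine ge_of_tendsto h ?_
    filter_upwards with n
    have hle : t ≤ t + 1 / ((n:ℝ) + 1) := by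
      have : (0:ℝ) < 1 / ((n:ℝ) + 1) := by positivity
      linarith
    have hmono := gD_monofun hC v hle
    have hn : (0:ℝ) ≤ (n:ℝ) + 1 := by positivity
    exact mul_nonneg hn (by simpa using sub_nonneg.mpr hmono)
  · rw [deriv_zero_of_not_differentiableAt hd]

lemma gD_le_one (hC : IsCopula C) (v t : ℝ) : gD C v t ≤ 1 :=
  (abs_le.mp (deriv_le_of_lipschitz (gD_lipfun hC v) t)).2

lemma gD_abs_le_one (hC : IsCopula C) (v t : ℝ) : |gD C v t| ≤ 1 :=
  deriv_le_of_lipschitz (gD_lipfun hC v) t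

lemma gD_ftc (hC : IsCopula C) (v : ℝ) {a b : ℝ} (hab : a ≤ b) :
    ∫ t in a..b, gD C v t = C (cl01 b) (cl01 v) - C (cl01 a) (cl01 v) :=
  lipschitz_ftc (gD_lipfun hC v) hab

lemma intervalIntegrable_of_meas_bdd {f : ℝ → ℝ} (hf : Measurable f) {M : ℝ}
    (hM : ∀ t, |f t| ≤ M) (a b : ℝ) : IntervalIntegrable f volume a b := by
  rw [intervalIntegrable_iff]
  apply Measure.integrableOn_of_bounded measure_Ioc_lt_top.ne hf.aestronglyMeasurable
  exact Filter.Eventually.of_forall fun t => by simpa using hM t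

lemma chi_meas (v : ℝ) : Measurable (fun t : ℝ => if t ≤ v then (1:ℝ) else 0) :=
  Measurable.ite measurableSet_Iic measurable_const measurable_const

lemma chi_abs_le_one (v t : ℝ) : |if t ≤ v then (1:ℝ) else 0| ≤ 1 := by
  split <;> norm_num

lemma integral_chi {v u : ℝ} (hv : 0 ≤ v) (hu : 0 ≤ u) :
    ∫ t in (0:ℝ)..u, (if t ≤ v then (1:ℝ) else 0) = min u v := by
  rcases le_total u v with h | h
  · rw [min_eq_left h]
    rw [intervalIntegral.integral_congr (g := fun _ => (1:ℝ))]
    · simp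
    · intro t ht
      rw [uIcc_of_le hu] at ht
      simp only [if_pos (ht.2.trans h)]
  · rw [min_eq_right h]
    have h1 : IntervalIntegrable (fun t : ℝ => if t ≤ v then (1:ℝ) else 0) volume 0 v :=
      intervalIntegrable_of_meas_bdd (chi_meas v) (chi_abs_le_one v) 0 v
    have h2 : IntervalIntegrable (fun t : ℝ => if t ≤ v then (1:ℝ) else 0) volume v u :=
      intervalIntegrable_of_meas_bdd (chi_meas v) (chi_abs_le_one v) v u
    rw [← intervalIntegral.integral_add_adjacent_intervals h1 h2]
    have e1 : ∫ t in (0:ℝ)..v, (if t ≤ v then (1:ℝ) else 0) = v := by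
      rw [intervalIntegral.integral_congr (g := fun _ => (1:ℝ))]
      · simp
      · intro t ht
        rw [uIcc_of_le hv] at ht
        simp only [if_pos ht.2]
    have e2 : ∫ t in v..u, (if t ≤ v then (1:ℝ) else 0) = 0 := by
      rw [intervalIntegral.integral_congr_ae (g := fun _ => (0:ℝ))]
      · simp
      · filter_upwards with t ht
        rw [uIoc_of_le h] at ht
        simp only [if_neg (not_le.mpr ht.1)]
    rw [e1, e2, add_zero]

lemma integral_gD_chi (hC : IsCopula C) {v : ℝ} (hv : v ∈ Icc (0:ℝ) 1) :
    ∫ t in (0:ℝ)..1, gD C v t * (if t ≤ v then (1:ℝ) else 0) = C v v := by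
  have hgm : Measurable (fun t => gD C v t) :=
    (gD_meas hC).comp (measurable_const.prodMk measurable_id)
  have hgbd : ∀ t, |gD C v t * (if t ≤ v then (1:ℝ) else 0)| ≤ 1 := by
    intro t
    rw [abs_mul]
    calc |gD C v t| * |if t ≤ v then (1:ℝ) else 0| ≤ 1 * 1 :=
        mul_le_mul (gD_abs_le_one hC v t) (chi_abs_le_one v t) (abs_nonneg _) zero_le_one
      _ = 1 := one_mul 1
  have hm : Measurable (fun t => gD C v t * (if t ≤ v then (1:ℝ) else 0)) :=
    hgm.mul (chi_meas v)
  have h1 : IntervalIntegrable (fun t => gD C v t * (if t ≤ v then (1:ℝ) else 0)) volume 0 v :=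
    intervalIntegrable_of_meas_bdd hm hgbd 0 v
  have h2 : IntervalIntegrable (fun t => gD C v t * (if t ≤ v then (1:ℝ) else 0)) volume v 1 :=
    intervalIntegrable_of_meas_bdd hm hgbd v 1
  rw [← intervalIntegral.integral_add_adjacent_intervals h1 h2]
  have e1 : ∫ t in (0:ℝ)..v, gD C v t * (if t ≤ v then (1:ℝ) else 0) = C v v := by
    rw [intervalIntegral.integral_congr (g := fun t => gD C v t)]
    · rw [gD_ftc hC v hv.1, cl01_eq hv, cl01_eq (by norm_num : (0:ℝ) ∈ Icc (0:ℝ) 1)]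
      rw [(hC.2.2.1 v hv).1, sub_zero]
    · intro t ht
      rw [uIcc_of_le hv.1] at ht
      simp only [if_pos ht.2, mul_one]
  have e2 : ∫ t in v..(1:ℝ), gD C v t * (if t ≤ v then (1:ℝ) else 0) = 0 := by
    rw [intervalIntegral.integral_congr_ae (g := fun _ => (0:ℝ))]
    · simp
    · filter_upwards with t ht
      rw [uIoc_of_le hv.2] at ht
      simp only [if_neg (not_le.mpr ht.1), mul_zero]
  rw [e1, e2, add_zero]

lemma integral_gD (hC : IsCopula C) {v : ℝ} (hv : v ∈ Icc (0:ℝ) 1) :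
    ∫ t in (0:ℝ)..1, gD C v t = v := by
  rw [gD_ftc hC v zero_le_one, cl01_eq hv, cl01_eq (by norm_num : (0:ℝ) ∈ Icc (0:ℝ) 1),
    cl01_eq (by norm_num : (1:ℝ) ∈ Icc (0:ℝ) 1), (hC.2.2.1 v hv).1, (hC.2.2.1 v hv).2, sub_zero]

lemma inner_P (hC : IsCopula C) (r : ℝ) {v : ℝ} (hv : v ∈ Icc (0:ℝ) 1) :
    ∫ t in (0:ℝ)..1, (gD C v t - ((1-r)*v + r * (if t ≤ v then (1:ℝ) else 0)))^2
    = (∫ t in (0:ℝ)..1, (gD C v t)^2) - 2*(1-r)*v*v - 2*r*(C v v)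
      + ((1-r)*v)^2 + (2*(1-r)*v*r + r^2)*v := by
  have hgm : Measurable (fun t => gD C v t) :=
    (gD_meas hC).comp (measurable_const.prodMk measurable_id)
  have key : ∀ t : ℝ, (gD C v t - ((1-r)*v + r * (if t ≤ v then (1:ℝ) else 0)))^2
      = (gD C v t)^2 - (2*(1-r)*v) * gD C v t - (2*r) * (gD C v t * (if t ≤ v then (1:ℝ) else 0))
        + (((1-r)*v)^2 + (2*(1-r)*v*r + r^2) * (if t ≤ v then (1:ℝ) else 0)) := by
    intro t
    by_cases h : t ≤ v <;> simp only [if_pos, if_neg, h, ite_true, ite_false] <;> ring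
  rw [intervalIntegral.integral_congr (g := fun t =>
      (gD C v t)^2 - (2*(1-r)*v) * gD C v t - (2*r) * (gD C v t * (if t ≤ v then (1:ℝ) else 0))
        + (((1-r)*v)^2 + (2*(1-r)*v*r + r^2) * (if t ≤ v then (1:ℝ) else 0)))
    (fun t _ => key t)]
  have i1 : IntervalIntegrable (fun t => (gD C v t)^2) volume 0 1 := by
    apply intervalIntegrable_of_meas_bdd (hgm.pow_const 2) (M := 1)
    intro t
    rw [abs_pow]
    calc |gD C v t|^2 ≤ 1^2 := by
          apply pow_le_pow_left₀ (abs_nonneg _) (gD_abs_le_one hC v t)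
      _ = 1 := one_pow 2
  have i2 : IntervalIntegrable (fun t => (2*(1-r)*v) * gD C v t) volume 0 1 := by
    apply intervalIntegrable_of_meas_bdd (hgm.const_mul _) (M := |2*(1-r)*v|)
    intro t
    rw [abs_mul]
    calc |2*(1-r)*v| * |gD C v t| ≤ |2*(1-r)*v| * 1 := by
          apply mul_le_mul_of_nonneg_left (gD_abs_le_one hC v t) (abs_nonneg _)
      _ = |2*(1-r)*v| := mul_one _
  have hchiprod : ∀ t, |gD C v t * (if t ≤ v then (1:ℝ) else 0)| ≤ 1 := by
    intro t
    rw [abs_mul]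
    exact (mul_le_mul (gD_abs_le_one hC v t) (chi_abs_le_one v t) (abs_nonneg _)
      zero_le_one).trans (by norm_num)
  have i3 : IntervalIntegrable
      (fun t => (2*r) * (gD C v t * (if t ≤ v then (1:ℝ) else 0))) volume 0 1 := by
    apply intervalIntegrable_of_meas_bdd ((hgm.mul (chi_meas v)).const_mul _) (M := |2*r|)
    intro t
    rw [abs_mul]
    calc |2*r| * |gD C v t * (if t ≤ v then (1:ℝ) else 0)| ≤ |2*r| * 1 :=
          mul_le_mul_of_nonneg_left (hchiprod t) (abs_nonneg _)
      _ = |2*r| := mul_one _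
  have i5 : IntervalIntegrable
      (fun t => (2*(1-r)*v*r + r^2) * (if t ≤ v then (1:ℝ) else 0)) volume 0 1 := by
    apply intervalIntegrable_of_meas_bdd ((chi_meas v).const_mul _) (M := |2*(1-r)*v*r + r^2|)
    intro t
    rw [abs_mul]
    calc |2*(1-r)*v*r + r^2| * |if t ≤ v then (1:ℝ) else 0| ≤ |2*(1-r)*v*r + r^2| * 1 :=
          mul_le_mul_of_nonneg_left (chi_abs_le_one v t) (abs_nonneg _)
      _ = _ := mul_one _
  have i4 : IntervalIntegrable (fun t =>
      (((1-r)*v)^2 + (2*(1-r)*v*r + r^2) * (if t ≤ v then (1:ℝ) else 0))) volume 0 1 :=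
    intervalIntegrable_const.add i5
  rw [intervalIntegral.integral_add (i1.sub i2 |>.sub i3) i4,
    intervalIntegral.integral_sub (i1.sub i2) i3, intervalIntegral.integral_sub i1 i2,
    intervalIntegral.integral_const_mul, intervalIntegral.integral_const_mul,
    intervalIntegral.integral_add (intervalIntegrable_const) i5,
    intervalIntegral.integral_const_mul, integral_gD hC hv, integral_gD_chi hC hv,
    integral_chi hv.1 zero_le_one, min_eq_right hv.2]
  simp only [intervalIntegral.integral_const, smul_eq_mul, sub_zero, one_mul]
  ring

lemma ae_ne_one : ∀ᵐ t : ℝ ∂volume, t ≠ 1 := by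
  rw [ae_iff]
  have : {t : ℝ | ¬ t ≠ 1} = {1} := by ext t; simp
  rw [this]
  exact measure_singleton 1

lemma inner_d1_eq_gD (hC : IsCopula C) {v : ℝ} (hv : v ∈ Icc (0:ℝ) 1) :
    ∫ t in (0:ℝ)..1, (d1 C t v)^2 = ∫ t in (0:ℝ)..1, (gD C v t)^2 := by
  apply intervalIntegral.integral_congr_ae
  filter_upwards [ae_ne_one] with t ht hmem
  rw [uIoc_of_le zero_le_one] at hmem
  have ht' : t ∈ Ioo (0:ℝ) 1 := ⟨hmem.1, lt_of_le_of_ne hmem.2 ht⟩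
  rw [gD_eq_d1 hv ht']

lemma main_ae (hC : IsCopula C) {x : ℝ} (hx0 : 0 < x) (hx1 : x ≤ 1)
    (hxi : xi C = x) (hpsi : psi C = Real.sqrt x) :
    ∀ᵐ p ∂((volume.restrict (Ioc (0:ℝ) 1)).prod (volume.restrict (Ioc (0:ℝ) 1))),
      gD C p.1 p.2 = (1 - Real.sqrt x) * p.1
        + Real.sqrt x * (if p.2 ≤ p.1 then (1:ℝ) else 0) := by
  set r := Real.sqrt x with hrdef
  have hr0 : 0 < r := Real.sqrt_pos.mpr hx0
  have hr1 : r ≤ 1 := by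
    rw [hrdef, show (1:ℝ) = Real.sqrt 1 by simp]
    exact Real.sqrt_le_sqrt hx1
  have hr2 : r^2 = x := Real.sq_sqrt hx0.le
  set μ := volume.restrict (Ioc (0:ℝ) 1) with hμ
  set Q : ℝ × ℝ → ℝ := fun p =>
    (gD C p.1 p.2 - ((1-r)*p.1 + r * (if p.2 ≤ p.1 then (1:ℝ) else 0)))^2 with hQdef
  have hQmeas : Measurable Q := by
    apply Measurable.pow_const
    apply Measurable.sub (gD_meas hC)
    apply Measurable.add (measurable_fst.const_mul _)
    apply Measurable.const_mul
    exact Measurable.ite (measurableSet_le measurable_snd measurable_fst)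
      measurable_const measurable_const
  have hQbd : ∀ p : ℝ × ℝ, p.1 ∈ Icc (0:ℝ) 1 → ‖Q p‖ ≤ 4 := by
    intro p hp
    have h1 : |gD C p.1 p.2| ≤ 1 := gD_abs_le_one hC _ _
    have h2 : |(1-r)*p.1 + r * (if p.2 ≤ p.1 then (1:ℝ) else 0)| ≤ 1 := by
      rw [abs_le]
      constructor
      · have : (0:ℝ) ≤ (1-r)*p.1 := mul_nonneg (by linarith) hp.1
        split <;> nlinarith
      · have : (1-r)*p.1 ≤ 1 - r := by nlinarith [hp.2]
        split <;> nlinarith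
    rw [Real.norm_eq_abs, hQdef, abs_pow]
    rw [abs_le] at h1 h2
    nlinarith [abs_nonneg (gD C p.1 p.2 - ((1-r)*p.1 + r * (if p.2 ≤ p.1 then (1:ℝ) else 0))),
      abs_le.mpr (⟨h1.1, h1.2⟩ : -(1:ℝ) ≤ gD C p.1 p.2 ∧ gD C p.1 p.2 ≤ 1),
      sq_abs (gD C p.1 p.2 - ((1-r)*p.1 + r * (if p.2 ≤ p.1 then (1:ℝ) else 0)))]
  have hQint : Integrable Q (μ.prod μ) := by
    rw [hμ, Measure.prod_restrict]
    apply Measure.integrableOn_of_bounded (M := 4)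
    · rw [Measure.prod_prod, Real.volume_Ioc]
      norm_num
    · exact hQmeas.aestronglyMeasurable
    · filter_upwards [ae_restrict_mem (measurableSet_Ioc.prod measurableSet_Ioc)] with p hp
      exact hQbd p (Ioc_subset_Icc_self hp.1)
  -- the outer iterated integral vanishes
  set A : ℝ → ℝ := fun v => ∫ t in Ioc (0:ℝ) 1, (gD C v t)^2 with hA
  have hAeq : ∀ v, A v = ∫ t in (0:ℝ)..1, (gD C v t)^2 := by
    intro v; rw [intervalIntegral.integral_of_le zero_le_one]
  have hAsm : StronglyMeasurable A :=
    (((gD_meas hC).pow_const 2).stronglyMeasurable).integral_prod_right'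
  have hAbd : ∀ v, |A v| ≤ 1 := by
    intro v
    rw [← Real.norm_eq_abs]
    calc ‖A v‖ ≤ 1 * (volume (Ioc (0:ℝ) 1)).toReal := by
          apply norm_setIntegral_le_of_norm_le_const measure_Ioc_lt_top
          intro t _
          rw [Real.norm_eq_abs, abs_pow]
          calc |gD C v t|^2 ≤ 1^2 := by
                apply pow_le_pow_left₀ (abs_nonneg _) (gD_abs_le_one hC v t)
            _ = 1 := one_pow 2
      _ = 1 := by rw [Real.volume_Ioc]; norm_num
  have hAint : ∫ v in (0:ℝ)..1, A v = (x + 2)/6 := by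
    have hS : ∫ v in (0:ℝ)..1, ∫ t in (0:ℝ)..1, (d1 C t v)^2 = ∫ v in (0:ℝ)..1, A v := by
      apply intervalIntegral.integral_congr
      intro v hv
      rw [uIcc_of_le zero_le_one] at hv
      dsimp only
      rw [inner_d1_eq_gD hC hv, hAeq v]
    rw [xi] at hxi
    rw [hS] at hxi
    linarith
  have hCc : ∫ v in (0:ℝ)..1, C (cl01 v) (cl01 v) = (r + 2)/6 := by
    have hS : ∫ v in (0:ℝ)..1, C v v = ∫ v in (0:ℝ)..1, C (cl01 v) (cl01 v) := by
      apply intervalIntegral.integral_congr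
      intro v hv
      rw [uIcc_of_le zero_le_one] at hv
      dsimp only
      rw [cl01_eq hv]
    rw [psi] at hpsi
    rw [hS] at hpsi
    linarith
  have hCcont : Continuous (fun v => C (cl01 v) (cl01 v)) := by
    have := (gD_contfun hC).comp (continuous_id.prodMk continuous_id : Continuous (fun v : ℝ => (v, v)))
    exact this
  have houter : ∫ v in (0:ℝ)..1, (∫ t in (0:ℝ)..1, Q (v, t)) = 0 := by
    have hstep : ∫ v in (0:ℝ)..1, (∫ t in (0:ℝ)..1, Q (v, t)) =
        ∫ v in (0:ℝ)..1, (A v + (-(2*(1-r))*v^2 - (2*r)*(C (cl01 v) (cl01 v))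
          + (1-r)^2*v^2 + (2*(1-r)*r)*v^2 + r^2*v)) := by
      apply intervalIntegral.integral_congr
      intro v hv
      rw [uIcc_of_le zero_le_one] at hv
      have := inner_P hC r hv
      simp only [hQdef]
      rw [this, hAeq v, cl01_eq hv]
      ring
    rw [hstep]
    have iA : IntervalIntegrable A volume 0 1 :=
      intervalIntegrable_of_meas_bdd hAsm.measurable hAbd 0 1
    have iRest : IntervalIntegrable (fun v => -(2*(1-r))*v^2 - (2*r)*(C (cl01 v) (cl01 v))
        + (1-r)^2*v^2 + (2*(1-r)*r)*v^2 + r^2*v) volume 0 1 := by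
      apply Continuous.intervalIntegrable
      exact ((((continuous_const.mul (continuous_pow 2)).sub
        (continuous_const.mul hCcont)).add (continuous_const.mul (continuous_pow 2))).add
        (continuous_const.mul (continuous_pow 2))).add (continuous_const.mul continuous_id)
    rw [intervalIntegral.integral_add iA iRest]
    have hrest : ∫ v in (0:ℝ)..1, (-(2*(1-r))*v^2 - (2*r)*(C (cl01 v) (cl01 v))
        + (1-r)^2*v^2 + (2*(1-r)*r)*v^2 + r^2*v) = -(2*(1-r))*(1/3) - (2*r)*((r+2)/6)
        + (1-r)^2*(1/3) + (2*(1-r)*r)*(1/3) + r^2*(1/2) := by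
      have c1 : IntervalIntegrable (fun v : ℝ => -(2*(1-r))*v^2) volume 0 1 :=
        (continuous_const.mul (continuous_pow 2)).intervalIntegrable 0 1
      have c2 : IntervalIntegrable (fun v : ℝ => (2*r)*(C (cl01 v) (cl01 v))) volume 0 1 := by
        apply Continuous.intervalIntegrable
        exact continuous_const.mul hCcont
      have c3 : IntervalIntegrable (fun v : ℝ => (1-r)^2*v^2) volume 0 1 :=
        (continuous_const.mul (continuous_pow 2)).intervalIntegrable 0 1
      have c4 : IntervalIntegrable (fun v : ℝ => (2*(1-r)*r)*v^2) volume 0 1 :=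
        (continuous_const.mul (continuous_pow 2)).intervalIntegrable 0 1
      have c5 : IntervalIntegrable (fun v : ℝ => r^2*v) volume 0 1 :=
        (continuous_const.mul continuous_id).intervalIntegrable 0 1
      have hv2 : ∫ v in (0:ℝ)..1, v^2 = 1/3 := by
        rw [integral_pow]; norm_num
      have hv1 : ∫ v in (0:ℝ)..1, v = 1/2 := by
        rw [integral_id]; norm_num
      rw [intervalIntegral.integral_add (((c1.sub c2).add c3).add c4) c5,
        intervalIntegral.integral_add ((c1.sub c2).add c3) c4,
        intervalIntegral.integral_add (c1.sub c2) c3,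
        intervalIntegral.integral_sub c1 c2,
        intervalIntegral.integral_const_mul, intervalIntegral.integral_const_mul,
        intervalIntegral.integral_const_mul, intervalIntegral.integral_const_mul,
        intervalIntegral.integral_const_mul, hv2, hv1, hCc]
    rw [hrest, hAint, ← hr2]
    ring
  -- pass to the product integral
  have hiter : ∫ p, Q p ∂(μ.prod μ) = 0 := by
    have h1 : Integrable (Function.uncurry (fun v t => Q (v, t))) (μ.prod μ) := hQint
    have h2 := MeasureTheory.integral_integral h1
    have h3 : ∫ v, ∫ t, Q (v, t) ∂μ ∂μ = ∫ v in (0:ℝ)..1, (∫ t in (0:ℝ)..1, Q (v, t)) := by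
      rw [intervalIntegral.integral_of_le zero_le_one]
      apply setIntegral_congr_fun measurableSet_Ioc
      intro v _
      dsimp only
      rw [intervalIntegral.integral_of_le zero_le_one, hμ]
    rw [← h2, h3, houter]
  have hQ0 : ∀ᵐ p ∂(μ.prod μ), Q p = 0 := by
    have := (integral_eq_zero_iff_of_nonneg (fun p => sq_nonneg _) hQint).mp hiter
    filter_upwards [this] with p hp
    exact hp
  filter_upwards [hQ0] with p hp
  have := (pow_eq_zero_iff two_ne_zero).mp hp
  linarith [sub_eq_zero.mp this]

/-- If `ξ(C) = x ∈ (0,1]` and `ψ(C) = √x`, then `C` is the Fréchet copula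
with parameter `√x`, pointwise on `[0,1]²`; equivalently, its first partial derivative equals
`(1-√x)v + √x·𝟙_{t ≤ v}` almost everywhere on `[0,1]²`. -/
theorem upper_bound_unique_maximizer (x : ℝ) (hx : x ∈ Ioc (0:ℝ) 1)
    (C : ℝ → ℝ → ℝ) (hC : IsCopula C) (hxi : xi C = x) (hpsi : psi C = Real.sqrt x) :
    (∀ u ∈ Icc (0:ℝ) 1, ∀ v ∈ Icc (0:ℝ) 1,
        C u v = (1 - Real.sqrt x) * u * v + Real.sqrt x * min u v) ∧
    (∀ᵐ p ∂((volume : Measure (ℝ × ℝ)).restrict (Icc (0:ℝ) 1 ×ˢ Icc (0:ℝ) 1)),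
        d1 C p.1 p.2 =
          (1 - Real.sqrt x) * p.2 + Real.sqrt x * (if p.1 ≤ p.2 then (1:ℝ) else 0)) := by
  obtain ⟨hx0, hx1⟩ := hx
  set r := Real.sqrt x with hrdef
  have hr0 : 0 < r := Real.sqrt_pos.mpr hx0
  have hr1 : r ≤ 1 := by
    rw [hrdef, show (1:ℝ) = Real.sqrt 1 by simp]
    exact Real.sqrt_le_sqrt hx1
  set μ := volume.restrict (Ioc (0:ℝ) 1) with hμ
  have hEq := main_ae hC hx0 hx1 hxi hpsi
  have hμprod : μ.prod μ = (volume : Measure (ℝ × ℝ)).restrict (Ioc 0 1 ×ˢ Ioc 0 1) := by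
    rw [hμ, Measure.prod_restrict, ← Measure.volume_eq_prod]
  -- null boundary sets
  have hz1 : (volume : Measure (ℝ × ℝ)) (({0} : Set ℝ) ×ˢ (univ : Set ℝ)) = 0 := by
    rw [Measure.volume_eq_prod, Measure.prod_prod, measure_singleton, zero_mul]
  have hz2 : (volume : Measure (ℝ × ℝ)) ((univ : Set ℝ) ×ˢ ({0} : Set ℝ)) = 0 := by
    rw [Measure.volume_eq_prod, Measure.prod_prod, measure_singleton, mul_zero]
  have hz3 : (volume : Measure (ℝ × ℝ)) (({1} : Set ℝ) ×ˢ (univ : Set ℝ)) = 0 := by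
    rw [Measure.volume_eq_prod, Measure.prod_prod, measure_singleton, zero_mul]
  have hsetEq : (Icc (0:ℝ) 1 ×ˢ Icc (0:ℝ) 1 : Set (ℝ × ℝ)) =ᵐ[volume]
      (Ioc (0:ℝ) 1 ×ˢ Ioc (0:ℝ) 1 : Set (ℝ × ℝ)) := by
    apply ae_eq_set.mpr
    constructor
    · apply measure_mono_null (t := (({0} : Set ℝ) ×ˢ (univ : Set ℝ)) ∪
        ((univ : Set ℝ) ×ˢ ({0} : Set ℝ)))
      · rintro ⟨p1, p2⟩ ⟨⟨hp1, hp2⟩, hnot⟩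
        rw [mem_prod] at hnot
        by_cases h1 : p1 ∈ Ioc (0:ℝ) 1
        · right
          have h2 : p2 ∉ Ioc (0:ℝ) 1 := fun hc => hnot ⟨h1, hc⟩
          rw [mem_Ioc, not_and_or, not_lt, not_le] at h2
          have hp2' : p2 = 0 := by
            rcases h2 with h | h
            · exact le_antisymm h hp2.1
            · linarith [hp2.2]
          exact mem_prod.mpr ⟨mem_univ _, by simp [hp2']⟩
        · left
          rw [mem_Ioc, not_and_or, not_lt, not_le] at h1
          have hp1' : p1 = 0 := by
            rcases h1 with h | h
            · exact le_antisymm h hp1.1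
            · linarith [hp1.2]
          exact mem_prod.mpr ⟨by simp [hp1'], mem_univ _⟩
      · exact measure_union_null hz1 hz2
    · have : (Ioc (0:ℝ) 1 ×ˢ Ioc (0:ℝ) 1 : Set (ℝ × ℝ)) \ (Icc 0 1 ×ˢ Icc 0 1) = ∅ := by
        apply diff_eq_empty.mpr
        exact prod_mono Ioc_subset_Icc_self Ioc_subset_Icc_self
      rw [this, measure_empty]
  constructor
  · -- pointwise identity
    have hvae := Measure.ae_ae_of_ae_prod hEq
    have hGood : ∀ᵐ v ∂μ, (v ∈ Ioc (0:ℝ) 1 ∧ ∀ᵐ t ∂μ, gD C v t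
        = (1 - r) * v + r * (if t ≤ v then (1:ℝ) else 0)) :=
      (ae_restrict_mem measurableSet_Ioc).and hvae
    have hFormula : ∀ v', (v' ∈ Ioc (0:ℝ) 1 ∧ ∀ᵐ t ∂μ, gD C v' t
        = (1 - r) * v' + r * (if t ≤ v' then (1:ℝ) else 0)) →
        ∀ u ∈ Icc (0:ℝ) 1, C u v' = (1 - r) * u * v' + r * min u v' := by
      rintro v' ⟨hv', hae⟩ u hu
      have hv'Icc : v' ∈ Icc (0:ℝ) 1 := Ioc_subset_Icc_self hv'
      have h1 : C u v' = ∫ t in (0:ℝ)..u, gD C v' t := by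
        rw [gD_ftc hC v' hu.1, cl01_eq hu, cl01_eq (by norm_num : (0:ℝ) ∈ Icc (0:ℝ) 1),
          cl01_eq hv'Icc, (hC.2.2.1 v' hv'Icc).1, sub_zero]
      have h2 : ∫ t in (0:ℝ)..u, gD C v' t
          = ∫ t in (0:ℝ)..u, ((1 - r) * v' + r * (if t ≤ v' then (1:ℝ) else 0)) := by
        rw [intervalIntegral.integral_of_le hu.1, intervalIntegral.integral_of_le hu.1]
        apply integral_congr_ae
        exact ae_restrict_of_ae_restrict_of_subset (Ioc_subset_Ioc_right hu.2) hae
      have ichi : IntervalIntegrable (fun t => r * (if t ≤ v' then (1:ℝ) else 0)) volume 0 u := by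
        apply intervalIntegrable_of_meas_bdd ((chi_meas v').const_mul r) (M := |r|)
        intro t
        rw [abs_mul]
        calc |r| * |if t ≤ v' then (1:ℝ) else 0| ≤ |r| * 1 :=
            mul_le_mul_of_nonneg_left (chi_abs_le_one v' t) (abs_nonneg _)
          _ = |r| := mul_one _
      have h3 : ∫ t in (0:ℝ)..u, ((1 - r) * v' + r * (if t ≤ v' then (1:ℝ) else 0))
          = (1 - r) * v' * u + r * min u v' := by
        rw [intervalIntegral.integral_add intervalIntegrable_const ichi,
          intervalIntegral.integral_const, intervalIntegral.integral_const_mul,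
          integral_chi hv'.1.le hu.1]
        simp only [smul_eq_mul, sub_zero]
        ring
      rw [h1, h2, h3]
      ring
    intro u hu v hv
    have key : ∀ ε : ℝ, 0 < ε → |C u v - ((1 - r) * u * v + r * min u v)| ≤ 2 * ε := by
      intro ε hε
      set a := max 0 (v - ε) with hadef
      set b := min 1 (v + ε) with hbdef
      have hab : a < b := by
        apply max_lt
        · apply lt_min one_pos
          linarith [hv.1]
        · apply lt_min
          · linarith [hv.2]
          · linarith
      have hsub : Ioc a b ⊆ Ioc 0 1 := Ioc_subset_Ioc (le_max_left 0 _) (min_le_left 1 _)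
      have hex : ∃ v', v' ∈ Ioc a b ∧ (v' ∈ Ioc (0:ℝ) 1 ∧ ∀ᵐ t ∂μ, gD C v' t
          = (1 - r) * v' + r * (if t ≤ v' then (1:ℝ) else 0)) := by
        by_contra hcon
        have hBad : Ioc a b ⊆ {w | ¬ (w ∈ Ioc (0:ℝ) 1 ∧ ∀ᵐ t ∂μ, gD C w t
            = (1 - r) * w + r * (if t ≤ w then (1:ℝ) else 0))} :=
          fun w hw hgood => hcon ⟨w, hw, hgood⟩
        have h0 : μ (Ioc a b) = 0 := measure_mono_null hBad (ae_iff.mp hGood)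
        rw [hμ, Measure.restrict_apply' measurableSet_Ioc,
          inter_eq_self_of_subset_left hsub, Real.volume_Ioc] at h0
        have := ENNReal.ofReal_eq_zero.mp h0
        linarith
      obtain ⟨v', hv'ab, hgood⟩ := hex
      have hform := hFormula v' hgood u hu
      have hv'Icc : v' ∈ Icc (0:ℝ) 1 := Ioc_subset_Icc_self hgood.1
      have hdist : |v - v'| ≤ ε := by
        rw [abs_le]
        constructor
        · have hb : b ≤ v + ε := min_le_right _ _
          linarith [hv'ab.2]
        · have ha : v - ε ≤ a := le_max_right _ _
          linarith [hv'ab.1]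
      have hmin : |min u v' - min u v| ≤ |v - v'| := by
        have := abs_min_sub_min_le_max u v' u v
        simp only [sub_self, abs_zero] at this
        calc |min u v' - min u v| ≤ max 0 |v' - v| := this
          _ = |v' - v| := max_eq_right (abs_nonneg _)
          _ = |v - v'| := abs_sub_comm _ _
      calc |C u v - ((1 - r) * u * v + r * min u v)|
          ≤ |C u v - C u v'| + |C u v' - ((1 - r) * u * v + r * min u v)| := by
            have := abs_sub_le (C u v) (C u v') ((1 - r) * u * v + r * min u v)
            linarith
        _ ≤ ε + ε := by
            apply add_le_add
            · calc |C u v - C u v'| ≤ |v - v'| := cop_abs2 hC hu hv'Icc hv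
                _ ≤ ε := hdist
            · rw [hform]
              have e1 : |(1 - r) * u * v' + r * min u v' - ((1 - r) * u * v + r * min u v)|
                  ≤ (1 - r) * u * |v' - v| + r * |min u v' - min u v| := by
                have : (1 - r) * u * v' + r * min u v' - ((1 - r) * u * v + r * min u v)
                    = (1 - r) * u * (v' - v) + r * (min u v' - min u v) := by ring
                rw [this]
                refine (abs_add_le _ _).trans ?_
                have a1 : |(1 - r) * u * (v' - v)| = (1 - r) * u * |v' - v| := by
                  rw [abs_mul, abs_of_nonneg (mul_nonneg (by linarith) hu.1)]
                have a2 : |r * (min u v' - min u v)| = r * |min u v' - min u v| := by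
                  rw [abs_mul, abs_of_nonneg hr0.le]
                rw [a1, a2]
              have e2 : (1 - r) * u * |v' - v| ≤ (1 - r) * |v - v'| := by
                rw [abs_sub_comm]
                have h1 : (1 - r) * u ≤ (1 - r) * 1 := by
                  apply mul_le_mul_of_nonneg_left hu.2 (by linarith)
                nlinarith [abs_nonneg (v - v')]
              have e3 : r * |min u v' - min u v| ≤ r * |v - v'| :=
                mul_le_mul_of_nonneg_left hmin hr0.le
              have : (1 - r) * |v - v'| + r * |v - v'| = |v - v'| := by ring
              linarith
      linarith
    have habs : |C u v - ((1 - r) * u * v + r * min u v)| ≤ 0 := by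
      by_contra hcon
      push_neg at hcon
      have := key (|C u v - ((1 - r) * u * v + r * min u v)| / 4) (by linarith)
      linarith
    have := abs_nonpos_iff.mp habs
    linarith [sub_eq_zero.mp this]
  · -- a.e. identity for the derivative
    have hswap := (Measure.measurePreserving_swap (μ := μ) (ν := μ)).quasiMeasurePreserving.ae hEq
    rw [hμprod] at hswap
    rw [Measure.restrict_congr_set hsetEq]
    have hne1 : ∀ᵐ p ∂((volume : Measure (ℝ × ℝ)).restrict (Ioc (0:ℝ) 1 ×ˢ Ioc 0 1)),
        p.1 ≠ 1 := by
      have hvol : (volume : Measure (ℝ × ℝ)) {p : ℝ × ℝ | ¬ p.1 ≠ 1} = 0 := by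
        apply measure_mono_null (t := ({1} : Set ℝ) ×ˢ (univ : Set ℝ)) _ hz3
        intro p hp
        simp only [mem_setOf_eq, not_not] at hp
        exact mem_prod.mpr ⟨by simp [hp], mem_univ _⟩
      exact ae_mono Measure.restrict_le_self (ae_iff.mpr hvol)
    filter_upwards [hswap, ae_restrict_mem (measurableSet_Ioc.prod measurableSet_Ioc), hne1]
      with p hp hmem hne
    have ht : p.1 ∈ Ioo (0:ℝ) 1 := ⟨hmem.1.1, lt_of_le_of_ne hmem.1.2 hne⟩
    have hv2 : p.2 ∈ Icc (0:ℝ) 1 := Ioc_subset_Icc_self hmem.2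
    rw [gD_eq_d1 hv2 ht]
    exact hp
end
end
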